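/- arXiv:1209.3125 — 5 statements merged into one kernel-verified Lean document; each statement's English description precedes it below -/
import Mathlib

section
/- Let Ω be a finite measure space and p ≥ 1. Assume f ∈ L^p(Ω) with ∫_Ω f = 0. Then for every a ∈ ℝ one has ‖f + a‖_{L^p(Ω)} ≥ (1/2) ‖f‖_{L^p(Ω)}. -/
open MeasureTheory ENNReal

/-- Lemma 2.1. Let `Ω` be a finite measure space and `p ≥ 1`.
If `f ∈ L^p(Ω)` and `∫_Ω f = 0`, then `‖f + a‖_{L^p} ≥ (1/2) ‖f‖_{L^p}` for every `a ∈ ℝ`. -/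
theorem stmt_1 {Ω : Type*} [MeasurableSpace Ω] (μ : Measure Ω) [IsFiniteMeasure μ]
    (p : ℝ) (hp : 1 ≤ p) (f : Ω → ℝ)
    (hf : MemLp f (ENNReal.ofReal p) μ)
    (hmean : ∫ x, f x ∂μ = 0) (a : ℝ) :
    2⁻¹ * eLpNorm f (ENNReal.ofReal p) μ
      ≤ eLpNorm (fun x => f x + a) (ENNReal.ofReal p) μ := by
  set P : ℝ≥0∞ := ENNReal.ofReal p with hP
  have hp0 : 0 < p := lt_of_lt_of_le one_pos hp
  have hP1 : 1 ≤ P := by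
    rw [hP, ← ENNReal.ofReal_one]; exact ENNReal.ofReal_le_ofReal hp
  have hP0 : P ≠ 0 := by
    rw [hP, Ne, ENNReal.ofReal_eq_zero]; linarith
  have hPtop : P ≠ ∞ := ENNReal.ofReal_ne_top
  have hPto : P.toReal = p := ENNReal.toReal_ofReal hp0.le
  set g : Ω → ℝ := fun x => f x + a with hg
  have hgmem : MemLp g P μ := hf.add (memLp_const a)
  by_cases hμ : μ = 0
  · simp [hμ, eLpNorm_measure_zero]
  -- integral of g
  have hfint : Integrable f μ := hf.integrable hP1
  have hgint : Integrable g μ := hgmem.integrable hP1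
  have hintg : ∫ x, g x ∂μ = a * (μ Set.univ).toReal := by
    rw [hg]
    simp only
    rw [integral_add hfint (integrable_const a), hmean, integral_const]
    simp [mul_comm, measureReal_def]
  -- step 1 : |a| * μ(univ) ≤ eLpNorm g 1
  have step1 : (‖a‖₊ : ℝ≥0∞) * μ Set.univ ≤ eLpNorm g 1 μ := by
    rw [eLpNorm_one_eq_lintegral_enorm, ← ofReal_integral_norm_eq_lintegral_enorm hgint]
    have h1 : |a| * (μ Set.univ).toReal ≤ ∫ x, ‖g x‖ ∂μ := by
      calc |a| * (μ Set.univ).toReal = ‖∫ x, g x ∂μ‖ := by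
            rw [hintg]; rw [Real.norm_eq_abs, abs_mul, abs_of_nonneg ENNReal.toReal_nonneg]
        _ ≤ ∫ x, ‖g x‖ ∂μ := norm_integral_le_integral_norm g
    calc (‖a‖₊ : ℝ≥0∞) * μ Set.univ
        = ENNReal.ofReal (|a| * (μ Set.univ).toReal) := by
          rw [ENNReal.ofReal_mul (abs_nonneg a), ENNReal.ofReal_toReal (measure_ne_top μ _)]
          congr 1
          exact Real.enorm_eq_ofReal_abs a
      _ ≤ ENNReal.ofReal (∫ x, ‖g x‖ ∂μ) := ENNReal.ofReal_le_ofReal h1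
  -- step 2 : eLpNorm (const a) P ≤ eLpNorm g P
  have hM0 : μ Set.univ ≠ 0 := by simpa [Measure.measure_univ_eq_zero] using hμ
  have hMtop : μ Set.univ ≠ ∞ := measure_ne_top μ _
  have hmono : eLpNorm g 1 μ ≤ eLpNorm g P μ * μ Set.univ ^ (1 - 1 / p) := by
    have := eLpNorm_le_eLpNorm_mul_rpow_measure_univ (μ := μ) hP1 hgmem.1
    simpa [hPto] using this
  have step2 : (‖a‖₊ : ℝ≥0∞) * μ Set.univ ^ (1 / p) ≤ eLpNorm g P μ := by
    have h2 : (‖a‖₊ : ℝ≥0∞) * μ Set.univ ≤ eLpNorm g P μ * μ Set.univ ^ (1 - 1 / p) :=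
      step1.trans hmono
    have h3 := mul_le_mul_left h2 (μ Set.univ ^ (1 / p - 1))
    have hsplit : μ Set.univ * μ Set.univ ^ (1 / p - 1) = μ Set.univ ^ (1 / p) := by
      nth_rewrite 1 [← ENNReal.rpow_one (μ Set.univ)]
      rw [← ENNReal.rpow_add _ _ hM0 hMtop]
      norm_num
    calc (‖a‖₊ : ℝ≥0∞) * μ Set.univ ^ (1 / p)
        = (‖a‖₊ : ℝ≥0∞) * μ Set.univ * μ Set.univ ^ (1 / p - 1) := by
          rw [mul_assoc, hsplit]
      _ ≤ eLpNorm g P μ * μ Set.univ ^ (1 - 1 / p) * μ Set.univ ^ (1 / p - 1) := h3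
      _ = eLpNorm g P μ := by
          rw [mul_assoc, ← ENNReal.rpow_add _ _ hM0 hMtop]
          norm_num
  -- step 3 : triangle inequality
  have hconst : eLpNorm (fun _ : Ω => -a) P μ = (‖a‖₊ : ℝ≥0∞) * μ Set.univ ^ (1 / p) := by
    rw [eLpNorm_const (-a) hP0 hμ, hPto]
    simp
    rfl
  have step3 : eLpNorm f P μ ≤ eLpNorm g P μ + (‖a‖₊ : ℝ≥0∞) * μ Set.univ ^ (1 / p) := by
    have hfeq : f = fun x => g x + (-a) := by funext x; simp [hg]
    calc eLpNorm f P μ = eLpNorm (fun x => g x + (-a)) P μ := by rw [← hfeq]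
      _ ≤ eLpNorm g P μ + eLpNorm (fun _ : Ω => -a) P μ :=
          eLpNorm_add_le hgmem.1 aestronglyMeasurable_const hP1
      _ = eLpNorm g P μ + (‖a‖₊ : ℝ≥0∞) * μ Set.univ ^ (1 / p) := by rw [hconst]
  have final : eLpNorm f P μ ≤ 2 * eLpNorm g P μ := by
    calc eLpNorm f P μ ≤ eLpNorm g P μ + eLpNorm g P μ := step3.trans (by gcongr)
      _ = 2 * eLpNorm g P μ := (two_mul _).symm
  rw [ENNReal.inv_mul_le_iff (by norm_num) (by norm_num)]
  exact final
end

section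
/- Let p ≥ 1, let X = ℝ^d with the Lebesgue measure and the Euclidean metric, and let φ = Φ(|·|) be a radially decreasing weight centered at the origin with 0 < Φ(1/2) and Φ(0) < ∞. Then there exists a positive constant C depending only on p, d and φ such that ∫_{B_1} |u(x) − u_{B_1}^φ|^p φ(x) dx ≤ C ∫_{B_1} |∇u(x)|^p φ(x) dx for every u ∈ W^{1,p}(B_1). -/
open MeasureTheory Metric Set ENNReal

/-- Power-mean (Jensen/Hölder) inequality for lintegral. -/
lemma my_jensen {α : Type*} [MeasurableSpace α] (μ : Measure α) {f : α → ℝ≥0∞}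
    (hf : AEMeasurable f μ) {p : ℝ} (hp : 1 ≤ p) :
    (∫⁻ a, f a ∂μ) ^ p ≤ (μ univ) ^ (p - 1) * ∫⁻ a, (f a) ^ p ∂μ := by
  rcases eq_or_lt_of_le hp with h1 | h1
  · simp [← h1]
  · have hpq : p.HolderConjugate (p / (p - 1)) := .conjExponent h1
    have hH := ENNReal.lintegral_mul_le_Lp_mul_Lq μ hpq hf aemeasurable_const (g := fun _ => 1)
    simp only [Pi.mul_apply, mul_one, ENNReal.one_rpow, lintegral_one] at hH
    have hp0 : (0:ℝ) ≤ p := le_trans zero_le_one hp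
    calc (∫⁻ a, f a ∂μ) ^ p
        ≤ ((∫⁻ a, f a ^ p ∂μ) ^ (1 / p) * μ univ ^ (1 / (p / (p - 1)))) ^ p :=
          ENNReal.rpow_le_rpow hH hp0
      _ = (∫⁻ a, f a ^ p ∂μ) ^ ((1 / p) * p) * μ univ ^ ((1 / (p / (p - 1))) * p) := by
          rw [ENNReal.mul_rpow_of_nonneg _ _ hp0, ← ENNReal.rpow_mul, ← ENNReal.rpow_mul]
      _ = (μ univ) ^ (p - 1) * ∫⁻ a, f a ^ p ∂μ := by
          rw [one_div_mul_cancel (by positivity), ENNReal.rpow_one, mul_comm]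
          congr 1
          field_simp

lemma my_cov {d : ℕ} {g : EuclideanSpace ℝ (Fin d) → ℝ≥0∞} (hg : Measurable g)
    (v : EuclideanSpace ℝ (Fin d)) {c : ℝ} (hc : 1/2 ≤ c) (hc1 : c ≤ 1) :
    ∫⁻ y, g (v + c • y) ∂volume ≤ 2 ^ d * ∫⁻ z, g z ∂volume := by
  have hc0 : (0:ℝ) < c := lt_of_lt_of_le (by norm_num) hc
  have hmap : ∫⁻ y, g (v + c • y) ∂(volume : Measure (EuclideanSpace ℝ (Fin d)))
      = ∫⁻ w, g (v + w) ∂(Measure.map (c • ·) (volume : Measure (EuclideanSpace ℝ (Fin d)))) := by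
    exact (lintegral_map (hg.comp (measurable_const_add v)) (measurable_const_smul c)).symm
  rw [hmap, Measure.map_addHaar_smul volume hc0.ne', lintegral_smul_measure,
    lintegral_add_left_eq_self g v]
  rw [smul_eq_mul]
  gcongr
  have hd : Module.finrank ℝ (EuclideanSpace ℝ (Fin d)) = d := by simp
  rw [hd]
  have h1 : |(c ^ d)⁻¹| ≤ 2 ^ d := by
    rw [abs_of_nonneg (by positivity)]
    rw [inv_le_comm₀ (by positivity) (by positivity), ← inv_pow]
    exact pow_le_pow_left₀ (by norm_num) (by linarith) d
  calc ENNReal.ofReal |(c ^ d)⁻¹| ≤ ENNReal.ofReal (2 ^ d) := ENNReal.ofReal_le_ofReal h1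
    _ = 2 ^ d := by rw [ENNReal.ofReal_pow (by norm_num)]; norm_num

lemma my_seg {d : ℕ} {u : EuclideanSpace ℝ (Fin d) → ℝ}
    (hu : DifferentiableOn ℝ u (ball 0 1))
    {x y : EuclideanSpace ℝ (Fin d)} (hx : x ∈ ball (0:EuclideanSpace ℝ (Fin d)) 1)
    (hy : y ∈ ball (0:EuclideanSpace ℝ (Fin d)) 1) :
    ENNReal.ofReal |u x - u y|
      ≤ 2 * ∫⁻ t in Icc (0:ℝ) 1, ENNReal.ofReal ‖fderiv ℝ u (x + t • (y - x))‖ := by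
  set γ : ℝ → EuclideanSpace ℝ (Fin d) := fun t => x + t • (y - x) with hγdef
  have hγmem : ∀ t ∈ Icc (0:ℝ) 1, γ t ∈ ball (0:EuclideanSpace ℝ (Fin d)) 1 :=
    fun t ht => (convex_ball _ _).add_smul_sub_mem hx hy ht
  set g : ℝ → ℝ := fun t => (fderiv ℝ u (γ t)) (y - x) with hgdef
  have hgb : ∀ t ∈ Icc (0:ℝ) 1, |g t| ≤ 2 * ‖fderiv ℝ u (γ t)‖ := by
    intro t ht
    calc |g t| ≤ ‖fderiv ℝ u (γ t)‖ * ‖y - x‖ := (fderiv ℝ u (γ t)).le_opNorm _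
      _ ≤ ‖fderiv ℝ u (γ t)‖ * 2 := by
          gcongr
          calc ‖y - x‖ ≤ ‖y‖ + ‖x‖ := norm_sub_le _ _
            _ ≤ 2 := by
                have h1 : ‖x‖ < 1 := by simpa using hx
                have h2 : ‖y‖ < 1 := by simpa using hy
                linarith
      _ = 2 * ‖fderiv ℝ u (γ t)‖ := mul_comm _ _
  have key : ENNReal.ofReal |u x - u y| ≤ ∫⁻ t in Icc (0:ℝ) 1, ENNReal.ofReal |g t| := by
    by_cases hfin : (∫⁻ t in Icc (0:ℝ) 1, ENNReal.ofReal |g t|) = ⊤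
    · rw [hfin]; exact le_top
    · have hγc : Continuous γ := continuous_const.add (continuous_id.smul continuous_const)
      have hgm : Measurable g :=
        (measurable_fderiv_apply_const ℝ u (y - x)).comp hγc.measurable
      have hgi : IntegrableOn g (Icc (0:ℝ) 1) := by
        refine ⟨hgm.aestronglyMeasurable, ?_⟩
        rw [hasFiniteIntegral_iff_norm]
        simpa [Real.norm_eq_abs] using lt_top_iff_ne_top.2 hfin
      have hgint : IntervalIntegrable g volume 0 1 :=
        (intervalIntegrable_iff_integrableOn_Icc_of_le zero_le_one).2 hgi
      have hder : ∀ t ∈ uIcc (0:ℝ) 1, HasDerivAt (fun s => u (γ s)) (g t) t := by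
        intro t ht
        rw [uIcc_of_le zero_le_one] at ht
        have h1 : HasDerivAt γ (y - x) t := by
          simpa [hγdef] using ((hasDerivAt_id t).smul_const (y - x)).const_add x
        have h2 : HasFDerivAt u (fderiv ℝ u (γ t)) (γ t) :=
          (hu.differentiableAt (isOpen_ball.mem_nhds (hγmem t ht))).hasFDerivAt
        exact h2.comp_hasDerivAt t h1
      have hftc : ∫ t in (0:ℝ)..1, g t = u (γ 1) - u (γ 0) :=
        intervalIntegral.integral_eq_sub_of_hasDerivAt hder hgint
      have hγ0 : γ 0 = x := by simp [hγdef]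
      have hγ1 : γ 1 = y := by simp [hγdef]
      rw [hγ0, hγ1] at hftc
      have habs : |u x - u y| = |∫ t in (0:ℝ)..1, g t| := by
        rw [hftc, abs_sub_comm]
      rw [habs, intervalIntegral.integral_of_le zero_le_one]
      calc ENNReal.ofReal |∫ t in Ioc (0:ℝ) 1, g t|
          ≤ ∫⁻ t in Ioc (0:ℝ) 1, ENNReal.ofReal |g t| := by
            rw [← Real.norm_eq_abs, ofReal_norm_eq_enorm]
            refine le_trans (enorm_integral_le_lintegral_enorm _) ?_
            apply lintegral_mono
            intro t
            simp [← ofReal_norm_eq_enorm, Real.norm_eq_abs]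
        _ ≤ ∫⁻ t in Icc (0:ℝ) 1, ENNReal.ofReal |g t| :=
            lintegral_mono_set Ioc_subset_Icc_self
  calc ENNReal.ofReal |u x - u y| ≤ ∫⁻ t in Icc (0:ℝ) 1, ENNReal.ofReal |g t| := key
    _ ≤ ∫⁻ t in Icc (0:ℝ) 1, 2 * ENNReal.ofReal ‖fderiv ℝ u (γ t)‖ := by
        refine setLIntegral_mono (by fun_prop) ?_
        intro t ht
        calc ENNReal.ofReal |g t| ≤ ENNReal.ofReal (2 * ‖fderiv ℝ u (γ t)‖) :=
              ENNReal.ofReal_le_ofReal (hgb t ht)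
          _ = 2 * ENNReal.ofReal ‖fderiv ℝ u (γ t)‖ := by
              rw [ENNReal.ofReal_mul (by norm_num)]
              norm_num
    _ = 2 * ∫⁻ t in Icc (0:ℝ) 1, ENNReal.ofReal ‖fderiv ℝ u (γ t)‖ :=
        lintegral_const_mul' _ _ (by norm_num)

set_option maxHeartbeats 1000000 in
/-- Corollary 3.1: weighted Poincaré inequality in `ℝ^d`. Let `p ≥ 1`
and let `φ = Φ(|·|)` be a radially decreasing weight on the unit ball of `ℝ^d`
(profile `Φ` nonnegative, nonincreasing and right-continuous on `[0,1)`) with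
`0 < Φ(1/2)`. Then there is a constant `C > 0` depending only on `p`, `d` and `φ` such
that `∫_{B_1} |u − u_{B_1}^φ|^p φ ≤ C ∫_{B_1} |∇u|^p φ` for every `u ∈ W^{1,p}(B_1)`
(formalized for differentiable representatives, with `∇u` the Fréchet derivative on
the ball). -/
theorem stmt_2 (d : ℕ) (p : ℝ) (hp : 1 ≤ p)
    (Φ : ℝ → ℝ)
    (hΦnonneg : ∀ r ∈ Ico (0:ℝ) 1, 0 ≤ Φ r)
    (hΦanti : AntitoneOn Φ (Ico (0:ℝ) 1))
    (hΦrc : ∀ r ∈ Ico (0:ℝ) 1, ContinuousWithinAt Φ (Ici r) r)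
    (hΦhalf : 0 < Φ (1/2)) :
    ∃ C : ℝ, 0 < C ∧
      ∀ u : EuclideanSpace ℝ (Fin d) → ℝ,
        DifferentiableOn ℝ u (ball 0 1) →
        MemLp u (ENNReal.ofReal p) (volume.restrict (ball 0 1)) →
        ∫⁻ x in ball (0 : EuclideanSpace ℝ (Fin d)) 1,
            ENNReal.ofReal
              (|u x - (∫ y in ball (0 : EuclideanSpace ℝ (Fin d)) 1, u y * Φ ‖y‖)
                  / (∫ y in ball (0 : EuclideanSpace ℝ (Fin d)) 1, Φ ‖y‖)| ^ p
                * Φ ‖x‖)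
          ≤ ENNReal.ofReal C
            * ∫⁻ x in ball (0 : EuclideanSpace ℝ (Fin d)) 1,
                ENNReal.ofReal (‖fderivWithin ℝ u (ball 0 1) x‖ ^ p * Φ ‖x‖) := by
  classical
  have hp0 : (0:ℝ) ≤ p := le_trans zero_le_one hp
  set B : Set (EuclideanSpace ℝ (Fin d)) := ball (0 : EuclideanSpace ℝ (Fin d)) 1 with hBdef
  set M : ℝ := Φ 0 with hMdef
  have hΦleM : ∀ r ∈ Ico (0:ℝ) 1, Φ r ≤ M := fun r hr =>
    hΦanti (by norm_num) hr hr.1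
  have hM0 : 0 < M := lt_of_lt_of_le hΦhalf (hΦanti (by norm_num) (by norm_num) (by norm_num))
  set S : Set ℝ := Φ '' Ico (0:ℝ) 1 with hSdef
  have hSne : S.Nonempty := ⟨Φ 0, 0, by norm_num, rfl⟩
  have hSbdd : BddBelow S := ⟨0, fun a ⟨r, hr, hra⟩ => hra ▸ hΦnonneg r hr⟩
  set Ψ : ℝ → ℝ := fun r => if r < 1 then Φ (max r 0) else sInf S with hΨdef
  have hΨeq : ∀ r : ℝ, 0 ≤ r → r < 1 → Ψ r = Φ r := by
    intro r h0 h1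
    simp [hΨdef, h1, max_eq_left h0]
  have hΨanti : Antitone Ψ := by
    intro a b hab
    by_cases hb : b < 1
    · have ha : a < 1 := lt_of_le_of_lt hab hb
      simp only [hΨdef, if_pos hb, if_pos ha]
      exact hΦanti ⟨le_max_right _ _, by simp [ha, hb]⟩
        ⟨le_max_right _ _, by simp [hb]⟩ (max_le_max hab le_rfl)
    · by_cases ha : a < 1
      · simp only [hΨdef, if_pos ha, if_neg hb]
        exact csInf_le hSbdd ⟨max a 0, ⟨le_max_right _ _, by simp [ha]⟩, rfl⟩
      · simp [hΨdef, if_neg ha, if_neg hb, le_refl]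
  have hΨ0 : ∀ r, 0 ≤ Ψ r := by
    intro r
    by_cases hr : r < 1
    · simpa [hΨdef, hr] using hΦnonneg _ ⟨le_max_right _ _, by simp [hr]⟩
    · simpa [hΨdef, hr] using le_csInf hSne fun a ⟨s, hs, hsa⟩ => hsa ▸ hΦnonneg s hs
  have hΨM : ∀ r, Ψ r ≤ M := by
    intro r
    by_cases hr : r < 1
    · simpa [hΨdef, hr] using hΦleM _ ⟨le_max_right _ _, by simp [hr]⟩
    · simp only [hΨdef, if_neg hr]
      exact csInf_le_of_le hSbdd ⟨0, by norm_num, rfl⟩ le_rfl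
  have hΨmeas : Measurable Ψ := hΨanti.measurable
  set w : EuclideanSpace ℝ (Fin d) → ℝ≥0∞ := fun z => ENNReal.ofReal (Ψ ‖z‖) with hwdef
  have hwmeas : Measurable w := (hΨmeas.comp measurable_norm).ennreal_ofReal
  have hmemB : ∀ z ∈ B, ‖z‖ < 1 := by
    intro z hz
    simpa [hBdef] using hz
  have hwB : ∀ z ∈ B, w z = ENNReal.ofReal (Φ ‖z‖) := by
    intro z hz
    simp only [hwdef]
    rw [hΨeq _ (norm_nonneg z) (hmemB z hz)]
  have hwtop : ∀ z, w z ≠ ⊤ := fun z => ENNReal.ofReal_ne_top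
  have hwleM : ∀ z, w z ≤ ENNReal.ofReal M := fun z => ENNReal.ofReal_le_ofReal (hΨM _)
  set I : ℝ≥0∞ := ∫⁻ y in B, w y with hIdef
  have hItop : I ≠ ⊤ := by
    have h : I ≤ ENNReal.ofReal M * volume B := by
      rw [hIdef]
      calc ∫⁻ y in B, w y ≤ ∫⁻ _ in B, ENNReal.ofReal M :=
            setLIntegral_mono measurable_const (fun z _ => hwleM z)
        _ = ENNReal.ofReal M * volume B := by rw [setLIntegral_const]
    exact ne_top_of_le_ne_top (ENNReal.mul_ne_top ENNReal.ofReal_ne_top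
      (by simpa [hBdef] using measure_ball_lt_top.ne)) h
  have hI0 : I ≠ 0 := by
    have hsub : ball (0:EuclideanSpace ℝ (Fin d)) (1/2) ⊆ B := ball_subset_ball (by norm_num)
    have hlow : ENNReal.ofReal (Φ (1/2)) * volume (ball (0:EuclideanSpace ℝ (Fin d)) (1/2))
        ≤ I := by
      rw [hIdef]
      calc ENNReal.ofReal (Φ (1/2)) * volume (ball (0:EuclideanSpace ℝ (Fin d)) (1/2))
          = ∫⁻ _ in ball (0:EuclideanSpace ℝ (Fin d)) (1/2), ENNReal.ofReal (Φ (1/2)) := by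
            rw [setLIntegral_const]
        _ ≤ ∫⁻ y in ball (0:EuclideanSpace ℝ (Fin d)) (1/2), w y := by
            refine setLIntegral_mono hwmeas (fun z hz => ?_)
            have hz2 : ‖z‖ < 1/2 := by simpa using hz
            simp only [hwdef]
            rw [hΨeq _ (norm_nonneg z) (by linarith)]
            exact ENNReal.ofReal_le_ofReal
              (hΦanti ⟨norm_nonneg z, by linarith⟩ (by norm_num) hz2.le)
        _ ≤ ∫⁻ y in B, w y := lintegral_mono_set hsub
    intro h0
    rw [h0] at hlow
    have h1 : ENNReal.ofReal (Φ (1/2)) * volume (ball (0:EuclideanSpace ℝ (Fin d)) (1/2)) ≠ 0 := by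
      apply mul_ne_zero
      · simpa using hΦhalf
      · exact (measure_ball_pos volume _ (by norm_num)).ne'
    exact h1 (le_antisymm hlow (by positivity))
  -- the constant
  set Cbig : ℝ≥0∞ := I⁻¹ * (2:ℝ≥0∞)^p * ENNReal.ofReal M * volume B * 2^d with hCbigdef
  have hCbigtop : Cbig ≠ ⊤ := by
    rw [hCbigdef]
    refine ENNReal.mul_ne_top (ENNReal.mul_ne_top (ENNReal.mul_ne_top (ENNReal.mul_ne_top
      ?_ ?_) ?_) ?_) ?_
    · exact ENNReal.inv_ne_top.2 hI0
    · exact ENNReal.rpow_ne_top_of_nonneg hp0 (by norm_num)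
    · exact ENNReal.ofReal_ne_top
    · simpa [hBdef] using measure_ball_lt_top.ne
    · exact (ENNReal.pow_ne_top (by norm_num))
  refine ⟨Cbig.toReal + 1, by positivity, ?_⟩
  have hCbigle : Cbig ≤ ENNReal.ofReal (Cbig.toReal + 1) := by
    rw [ENNReal.ofReal_add ENNReal.toReal_nonneg zero_le_one, ENNReal.ofReal_toReal hCbigtop]
    exact le_self_add
  intro u hud hmem
  haveI hfin : IsFiniteMeasure (volume.restrict B) :=
    ⟨by rw [Measure.restrict_apply_univ]; simpa [hBdef] using measure_ball_lt_top⟩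
  have haesm : AEStronglyMeasurable u (volume.restrict B) := hmem.aestronglyMeasurable
  have haem : AEMeasurable u (volume.restrict B) := haesm.aemeasurable
  have hu1 : Integrable u (volume.restrict B) := by
    rw [← memLp_one_iff_integrable]
    refine hmem.mono_exponent ?_
    calc (1:ℝ≥0∞) = ENNReal.ofReal 1 := by simp
      _ ≤ ENNReal.ofReal p := ENNReal.ofReal_le_ofReal hp
  have hφaesm : AEStronglyMeasurable (fun y => Ψ ‖y‖) (volume.restrict B) :=
    (hΨmeas.comp measurable_norm).aestronglyMeasurable
  have hφbdd : ∀ y : EuclideanSpace ℝ (Fin d), ‖Ψ ‖y‖‖ ≤ M := by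
    intro y
    rw [Real.norm_eq_abs, abs_of_nonneg (hΨ0 _)]
    exact hΨM _
  have hφint : Integrable (fun y => Ψ ‖y‖) (volume.restrict B) := by
    refine ⟨hφaesm, ?_⟩
    exact HasFiniteIntegral.of_bounded (C := M) (Filter.Eventually.of_forall hφbdd)
  have huφ : Integrable (fun y => u y * Ψ ‖y‖) (volume.restrict B) := by
    have h := hu1.bdd_mul hφaesm (Filter.Eventually.of_forall hφbdd)
    exact h.congr (Filter.Eventually.of_forall (fun y => mul_comm _ _))
  -- rewrite the weighted mean with Ψ
  have hnum : ∫ y in B, u y * Φ ‖y‖ = ∫ y in B, u y * Ψ ‖y‖ := by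
    refine setIntegral_congr_fun measurableSet_ball (fun y hy => ?_)
    rw [hΨeq _ (norm_nonneg y) (hmemB y hy)]
  have hden : ∫ y in B, Φ ‖y‖ = ∫ y in B, Ψ ‖y‖ := by
    refine setIntegral_congr_fun measurableSet_ball (fun y hy => ?_)
    rw [hΨeq _ (norm_nonneg y) (hmemB y hy)]
  rw [hnum, hden]
  set Ir : ℝ := ∫ y in B, Ψ ‖y‖ with hIrdef
  set c : ℝ := (∫ y in B, u y * Ψ ‖y‖) / Ir with hcdef
  have hIr : ENNReal.ofReal Ir = I := by
    rw [hIrdef, ofReal_integral_eq_lintegral_ofReal hφint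
      (Filter.Eventually.of_forall (fun y => hΨ0 _))]
  have hIrpos : 0 < Ir := by
    by_contra hcon
    push_neg at hcon
    exact hI0 (by rw [← hIr, ENNReal.ofReal_eq_zero.2 hcon])
  -- Step 1: pointwise Jensen bound
  set K : EuclideanSpace ℝ (Fin d) → ℝ≥0∞ :=
    fun x => ∫⁻ y in B, ENNReal.ofReal (|u x - u y| ^ p) * w y with hKdef
  have h1 : ∀ x ∈ B, ENNReal.ofReal (|u x - c| ^ p) ≤ I⁻¹ * K x := by
    intro x hx
    set J : ℝ≥0∞ := ∫⁻ y in B, ENNReal.ofReal |u x - u y| * w y with hJdef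
    have habsint : Integrable (fun y => |u x - u y| * Ψ ‖y‖) (volume.restrict B) := by
      have h := (((integrable_const (u x)).sub hu1).abs).bdd_mul hφaesm (Filter.Eventually.of_forall hφbdd)
      exact h.congr (Filter.Eventually.of_forall (fun y => mul_comm _ _))
    have heq : u x - c = (∫ y in B, (u x - u y) * Ψ ‖y‖) / Ir := by
      have h2 : ∫ y in B, (u x - u y) * Ψ ‖y‖ = u x * Ir - ∫ y in B, u y * Ψ ‖y‖ := by
        have h3 : (fun y => (u x - u y) * Ψ ‖y‖)
            = fun y => u x * Ψ ‖y‖ - u y * Ψ ‖y‖ := funext fun y => sub_mul _ _ _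
        rw [h3, integral_sub (hφint.const_mul (u x)) huφ, integral_const_mul, hIrdef]
      rw [h2, hcdef]
      field_simp
    have habs : |u x - c| ≤ (∫ y in B, |u x - u y| * Ψ ‖y‖) / Ir := by
      rw [heq, abs_div, abs_of_pos hIrpos]
      gcongr

      have h5 := norm_integral_le_integral_norm (μ := volume.restrict B)
        (fun y => (u x - u y) * Ψ ‖y‖)
      simp only [Real.norm_eq_abs, abs_mul] at h5
      refine h5.trans_eq (integral_congr_ae (Filter.Eventually.of_forall (fun y => ?_)))
      simp only []
      rw [abs_of_nonneg (hΨ0 _)]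
    have hJle : ENNReal.ofReal |u x - c| ≤ J / I := by
      calc ENNReal.ofReal |u x - c|
          ≤ ENNReal.ofReal ((∫ y in B, |u x - u y| * Ψ ‖y‖) / Ir) :=
            ENNReal.ofReal_le_ofReal habs
        _ = ENNReal.ofReal (∫ y in B, |u x - u y| * Ψ ‖y‖) / ENNReal.ofReal Ir :=
            ENNReal.ofReal_div_of_pos hIrpos
        _ = J / I := by
            rw [hIr, ofReal_integral_eq_lintegral_ofReal habsint
              (Filter.Eventually.of_forall (fun y => mul_nonneg (abs_nonneg _) (hΨ0 _)))]
            congr 1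
            refine lintegral_congr (fun y => ?_)
            rw [ENNReal.ofReal_mul (abs_nonneg _)]
    -- Jensen via withDensity
    set μw : Measure (EuclideanSpace ℝ (Fin d)) := (volume.restrict B).withDensity w with hμwdef
    have hwfin : ∀ᵐ z ∂(volume.restrict B), w z < ⊤ :=
      Filter.Eventually.of_forall (fun z => ENNReal.ofReal_lt_top)
    have hJw : ∫⁻ y, ENNReal.ofReal |u x - u y| ∂μw = J := by
      rw [hμwdef, lintegral_withDensity_eq_lintegral_mul_non_measurable _ hwmeas hwfin]
      exact lintegral_congr (fun y => by simp only [Pi.mul_apply]; exact mul_comm _ _)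
    have hKw : ∫⁻ y, (ENNReal.ofReal |u x - u y|) ^ p ∂μw = K x := by
      rw [hμwdef, lintegral_withDensity_eq_lintegral_mul_non_measurable _ hwmeas hwfin, hKdef]
      refine lintegral_congr (fun y => ?_)
      simp only [Pi.mul_apply]
      rw [ENNReal.ofReal_rpow_of_nonneg (abs_nonneg _) hp0, mul_comm]
    have hμwuniv : μw univ = I := by
      rw [hμwdef, withDensity_apply _ MeasurableSet.univ, Measure.restrict_univ, hIdef]
    have hfae : AEMeasurable (fun y => ENNReal.ofReal |u x - u y|) μw := by
      have h : AEMeasurable (fun y => ENNReal.ofReal |u x - u y|) (volume.restrict B) := by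
        fun_prop
      exact h.mono_ac (withDensity_absolutelyContinuous _ _)
    have hjen := my_jensen μw hfae hp
    rw [hJw, hKw, hμwuniv] at hjen
    have hIp1top : I ^ (p - 1) ≠ ⊤ := ENNReal.rpow_ne_top_of_nonneg (by linarith) hItop
    have hIp10 : I ^ (p - 1) ≠ 0 := by
      simp only [ne_eq, ENNReal.rpow_eq_zero_iff, not_or]
      constructor
      · rintro ⟨h, -⟩; exact hI0 h
      · rintro ⟨h, -⟩; exact hItop h
    calc ENNReal.ofReal (|u x - c| ^ p)
        = (ENNReal.ofReal |u x - c|) ^ p :=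
          (ENNReal.ofReal_rpow_of_nonneg (abs_nonneg _) hp0).symm
      _ ≤ (J / I) ^ p := ENNReal.rpow_le_rpow hJle hp0
      _ = J ^ p / I ^ p := ENNReal.div_rpow_of_nonneg _ _ hp0
      _ ≤ (I ^ (p - 1) * K x) / I ^ p := by gcongr
      _ = I⁻¹ * K x := by
          have hsplit : I ^ p = I ^ (p - 1) * I := by
            have h4 : p = (p - 1) + 1 := by ring
            rw [h4, ENNReal.rpow_add _ _ hI0 hItop, ENNReal.rpow_one]
            ring_nf
          rw [hsplit, ENNReal.mul_div_mul_left _ _ hIp10 hIp1top,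
            ENNReal.div_eq_inv_mul]
  -- objects for Steps 2-3
  have hfdm : Measurable (fun z => ENNReal.ofReal (‖fderiv ℝ u z‖ ^ p)) := by
    have h := (measurable_fderiv ℝ u (E := EuclideanSpace ℝ (Fin d)) (F := ℝ)).norm
    fun_prop
  set H : EuclideanSpace ℝ (Fin d) → ℝ≥0∞ :=
    B.indicator (fun z => ENNReal.ofReal (‖fderiv ℝ u z‖ ^ p) * w z) with hHdef
  have hHmeas : Measurable H := (hfdm.mul hwmeas).indicator measurableSet_ball
  set R : ℝ≥0∞ := ∫⁻ z, H z with hRdef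
  have hR : R = ∫⁻ x in B, ENNReal.ofReal (‖fderivWithin ℝ u B x‖ ^ p * Φ ‖x‖) := by
    rw [hRdef, hHdef, lintegral_indicator measurableSet_ball]
    refine setLIntegral_congr_fun measurableSet_ball
      (fun x hx => ?_)
    rw [hwB x hx, ← ENNReal.ofReal_mul (by positivity),
      fderivWithin_of_isOpen isOpen_ball (by simpa [hBdef] using hx)]
  set G : EuclideanSpace ℝ (Fin d) → EuclideanSpace ℝ (Fin d) → ℝ≥0∞ :=
    fun x y => ∫⁻ t in Icc (0:ℝ) 1, H (x + t • (y - x)) with hGdef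
  set M' : ℝ≥0∞ := ENNReal.ofReal M with hM'def
  -- Step 2
  have h2 : ∀ x ∈ B, ∀ y ∈ B,
      ENNReal.ofReal (|u x - u y| ^ p) * w y * w x ≤ (2:ℝ≥0∞) ^ p * M' * G x y := by
    intro x hx y hy
    have hwywx : w y * w x ≠ ⊤ := ENNReal.mul_ne_top (hwtop y) (hwtop x)
    -- (a) segment bound with Jensen in t
    have hseg := my_seg hud hx hy
    have hjen : (∫⁻ t in Icc (0:ℝ) 1, ENNReal.ofReal ‖fderiv ℝ u (x + t • (y - x))‖) ^ p
        ≤ ∫⁻ t in Icc (0:ℝ) 1, ENNReal.ofReal (‖fderiv ℝ u (x + t • (y - x))‖ ^ p) := by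
      have hγm : Measurable (fun t : ℝ => x + t • (y - x)) :=
        (continuous_const.add (continuous_id.smul continuous_const)).measurable
      have hfa : AEMeasurable (fun t : ℝ => ENNReal.ofReal ‖fderiv ℝ u (x + t • (y - x))‖)
          (volume.restrict (Icc (0:ℝ) 1)) :=
        (((measurable_fderiv ℝ u).norm.comp hγm).ennreal_ofReal).aemeasurable
      have h := my_jensen (volume.restrict (Icc (0:ℝ) 1)) hfa hp
      rw [Measure.restrict_apply_univ, Real.volume_Icc] at h
      simp only [sub_zero, ENNReal.ofReal_one, ENNReal.one_rpow, one_mul] at h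
      refine h.trans_eq (lintegral_congr (fun t => ?_))
      rw [ENNReal.ofReal_rpow_of_nonneg (norm_nonneg _) hp0]
    have ha : ENNReal.ofReal (|u x - u y| ^ p)
        ≤ (2:ℝ≥0∞) ^ p * ∫⁻ t in Icc (0:ℝ) 1,
            ENNReal.ofReal (‖fderiv ℝ u (x + t • (y - x))‖ ^ p) := by
      calc ENNReal.ofReal (|u x - u y| ^ p)
          = (ENNReal.ofReal |u x - u y|) ^ p :=
            (ENNReal.ofReal_rpow_of_nonneg (abs_nonneg _) hp0).symm
        _ ≤ ((2:ℝ≥0∞) * ∫⁻ t in Icc (0:ℝ) 1,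
              ENNReal.ofReal ‖fderiv ℝ u (x + t • (y - x))‖) ^ p :=
            ENNReal.rpow_le_rpow hseg hp0
        _ = (2:ℝ≥0∞) ^ p * (∫⁻ t in Icc (0:ℝ) 1,
              ENNReal.ofReal ‖fderiv ℝ u (x + t • (y - x))‖) ^ p :=
            ENNReal.mul_rpow_of_nonneg _ _ hp0
        _ ≤ (2:ℝ≥0∞) ^ p * ∫⁻ t in Icc (0:ℝ) 1,
              ENNReal.ofReal (‖fderiv ℝ u (x + t • (y - x))‖ ^ p) := by gcongr
    -- (b) weight comparison along the segment
    have hb : ∀ t ∈ Icc (0:ℝ) 1,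
        ENNReal.ofReal (‖fderiv ℝ u (x + t • (y - x))‖ ^ p) * (w y * w x)
          ≤ M' * H (x + t • (y - x)) := by
      intro t ht
      have hγB : x + t • (y - x) ∈ B := (convex_ball _ _).add_smul_sub_mem hx hy ht
      have hnx : ‖x‖ < 1 := hmemB x hx
      have hny : ‖y‖ < 1 := hmemB y hy
      have hnγ : ‖x + t • (y - x)‖ ≤ max ‖x‖ ‖y‖ := by
        have hrw : x + t • (y - x) = (1 - t) • x + t • y := by module
        rw [hrw]
        calc ‖(1 - t) • x + t • y‖ ≤ ‖(1 - t) • x‖ + ‖t • y‖ := norm_add_le _ _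
          _ = (1 - t) * ‖x‖ + t * ‖y‖ := by
              rw [norm_smul, norm_smul, Real.norm_eq_abs, Real.norm_eq_abs,
                abs_of_nonneg (by linarith [ht.2]), abs_of_nonneg ht.1]
          _ ≤ (1 - t) * max ‖x‖ ‖y‖ + t * max ‖x‖ ‖y‖ := by
              have h1 : ‖x‖ ≤ max ‖x‖ ‖y‖ := le_max_left _ _
              have h2 : ‖y‖ ≤ max ‖x‖ ‖y‖ := le_max_right _ _
              have ht0 := ht.1
              have ht1 := ht.2
              nlinarith
          _ = max ‖x‖ ‖y‖ := by ring
      have hmax1 : max ‖x‖ ‖y‖ < 1 := max_lt hnx hny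
      have hΦγ : Φ (max ‖x‖ ‖y‖) ≤ Φ ‖x + t • (y - x)‖ :=
        hΦanti ⟨norm_nonneg _, lt_of_le_of_lt hnγ hmax1⟩
          ⟨le_trans (norm_nonneg x) (le_max_left _ _), hmax1⟩ hnγ
      have hkey : Φ ‖y‖ * Φ ‖x‖ ≤ M * Φ ‖x + t • (y - x)‖ := by
        have hΦxM : Φ ‖x‖ ≤ M := hΦleM _ ⟨norm_nonneg _, hnx⟩
        have hΦyM : Φ ‖y‖ ≤ M := hΦleM _ ⟨norm_nonneg _, hny⟩
        have hΦx0 : 0 ≤ Φ ‖x‖ := hΦnonneg _ ⟨norm_nonneg _, hnx⟩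
        have hΦy0 : 0 ≤ Φ ‖y‖ := hΦnonneg _ ⟨norm_nonneg _, hny⟩
        rcases max_cases ‖x‖ ‖y‖ with ⟨hm, -⟩ | ⟨hm, -⟩
        · rw [hm] at hΦγ
          calc Φ ‖y‖ * Φ ‖x‖ ≤ M * Φ ‖x‖ := by gcongr
            _ ≤ M * Φ ‖x + t • (y - x)‖ := by gcongr
        · rw [hm] at hΦγ
          calc Φ ‖y‖ * Φ ‖x‖ ≤ Φ ‖y‖ * M := by gcongr
            _ = M * Φ ‖y‖ := mul_comm _ _
            _ ≤ M * Φ ‖x + t • (y - x)‖ := by gcongr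
      have hwcomp : w y * w x ≤ M' * w (x + t • (y - x)) := by
        rw [hwB y hy, hwB x hx, hwB _ hγB, hM'def,
          ← ENNReal.ofReal_mul (hΦnonneg _ ⟨norm_nonneg _, hny⟩),
          ← ENNReal.ofReal_mul hM0.le]
        exact ENNReal.ofReal_le_ofReal hkey
      calc ENNReal.ofReal (‖fderiv ℝ u (x + t • (y - x))‖ ^ p) * (w y * w x)
          ≤ ENNReal.ofReal (‖fderiv ℝ u (x + t • (y - x))‖ ^ p)
              * (M' * w (x + t • (y - x))) := by gcongr
        _ = M' * (ENNReal.ofReal (‖fderiv ℝ u (x + t • (y - x))‖ ^ p)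
              * w (x + t • (y - x))) := by
            rw [mul_comm (ENNReal.ofReal (‖fderiv ℝ u (x + t • (y - x))‖ ^ p)) (M' * _),
              mul_assoc, mul_comm (w _)]
        _ = M' * H (x + t • (y - x)) := by rw [hHdef, indicator_of_mem hγB]
    calc ENNReal.ofReal (|u x - u y| ^ p) * w y * w x
        = ENNReal.ofReal (|u x - u y| ^ p) * (w y * w x) := mul_assoc _ _ _
      _ ≤ ((2:ℝ≥0∞) ^ p * ∫⁻ t in Icc (0:ℝ) 1,
            ENNReal.ofReal (‖fderiv ℝ u (x + t • (y - x))‖ ^ p)) * (w y * w x) := by gcongr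
      _ = (2:ℝ≥0∞) ^ p * ∫⁻ t in Icc (0:ℝ) 1,
            ENNReal.ofReal (‖fderiv ℝ u (x + t • (y - x))‖ ^ p) * (w y * w x) := by
          rw [mul_assoc, lintegral_mul_const' _ _ hwywx]
      _ ≤ (2:ℝ≥0∞) ^ p * ∫⁻ t in Icc (0:ℝ) 1, M' * H (x + t • (y - x)) := by
          refine mul_le_mul_right ?_ _
          exact lintegral_mono_ae (ae_restrict_of_forall_mem measurableSet_Icc hb)
      _ = (2:ℝ≥0∞) ^ p * M' * G x y := by
          rw [lintegral_const_mul' _ _ ENNReal.ofReal_ne_top, hGdef, mul_assoc]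
  -- Step 3: Tonelli + change of variables
  have h3 : (∫⁻ x in B, ∫⁻ y in B, G x y) ≤ volume B * ((2:ℝ≥0∞) ^ d * R) := by
    set F : EuclideanSpace ℝ (Fin d) → ℝ → ℝ≥0∞ :=
      fun x t => ∫⁻ y in B, H (x + t • (y - x)) with hFdef
    have hswap1 : ∀ x, (∫⁻ y in B, G x y) = ∫⁻ t in Icc (0:ℝ) 1, F x t := by
      intro x
      rw [hGdef, hFdef]
      refine lintegral_lintegral_swap ?_
      have hc : Continuous (fun q : EuclideanSpace ℝ (Fin d) × ℝ => x + q.2 • (q.1 - x)) :=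
        continuous_const.add (continuous_snd.smul (continuous_fst.sub continuous_const))
      exact (hHmeas.comp hc.measurable).aemeasurable
    have hswap2 : (∫⁻ x in B, ∫⁻ t in Icc (0:ℝ) 1, F x t)
        = ∫⁻ t in Icc (0:ℝ) 1, ∫⁻ x in B, F x t := by
      refine lintegral_lintegral_swap ?_
      have hc : Continuous (fun r : (EuclideanSpace ℝ (Fin d) × ℝ) × EuclideanSpace ℝ (Fin d)
          => r.1.1 + r.1.2 • (r.2 - r.1.1)) :=
        (continuous_fst.comp continuous_fst).add
          ((continuous_snd.comp continuous_fst).smul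
            (continuous_snd.sub (continuous_fst.comp continuous_fst)))
      exact (Measurable.lintegral_prod_right' (hHmeas.comp hc.measurable)).aemeasurable
    have hbound : ∀ t ∈ Icc (0:ℝ) 1, (∫⁻ x in B, F x t) ≤ volume B * ((2:ℝ≥0∞) ^ d * R) := by
      intro t ht
      rcases le_or_gt (1/2 : ℝ) t with h12 | h12
      · have hinner : ∀ x : EuclideanSpace ℝ (Fin d), F x t ≤ (2:ℝ≥0∞) ^ d * R := by
          intro x
          rw [hFdef]
          have hrw : ∀ y : EuclideanSpace ℝ (Fin d),
              x + t • (y - x) = (x - t • x) + t • y := fun y => by module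
          calc (∫⁻ y in B, H (x + t • (y - x)))
              = ∫⁻ y in B, H ((x - t • x) + t • y) := by
                exact lintegral_congr (fun y => by rw [hrw y])
            _ ≤ ∫⁻ y, H ((x - t • x) + t • y) := setLIntegral_le_lintegral _ _
            _ ≤ (2:ℝ≥0∞) ^ d * ∫⁻ z, H z := my_cov hHmeas _ h12 ht.2
            _ = (2:ℝ≥0∞) ^ d * R := by rw [hRdef]
        calc (∫⁻ x in B, F x t) ≤ ∫⁻ _ in B, (2:ℝ≥0∞) ^ d * R :=
              lintegral_mono (fun x => hinner x)
          _ = (2:ℝ≥0∞) ^ d * R * volume B := setLIntegral_const _ _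
          _ = volume B * ((2:ℝ≥0∞) ^ d * R) := mul_comm _ _
      · have hswap3 : (∫⁻ x in B, F x t)
            = ∫⁻ y in B, ∫⁻ x in B, H (x + t • (y - x)) := by
          rw [hFdef]
          refine lintegral_lintegral_swap ?_
          have hc : Continuous (fun q : EuclideanSpace ℝ (Fin d) × EuclideanSpace ℝ (Fin d)
              => q.1 + t • (q.2 - q.1)) :=
            continuous_fst.add ((continuous_const (y := t)).smul (continuous_snd.sub continuous_fst))
          exact (hHmeas.comp hc.measurable).aemeasurable
        have hinner : ∀ y : EuclideanSpace ℝ (Fin d),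
            (∫⁻ x in B, H (x + t • (y - x))) ≤ (2:ℝ≥0∞) ^ d * R := by
          intro y
          have hrw : ∀ x : EuclideanSpace ℝ (Fin d),
              x + t • (y - x) = (t • y) + (1 - t) • x := fun x => by module
          calc (∫⁻ x in B, H (x + t • (y - x)))
              = ∫⁻ x in B, H ((t • y) + (1 - t) • x) := by
                exact lintegral_congr (fun x => by rw [hrw x])
            _ ≤ ∫⁻ x, H ((t • y) + (1 - t) • x) := setLIntegral_le_lintegral _ _
            _ ≤ (2:ℝ≥0∞) ^ d * ∫⁻ z, H z := my_cov hHmeas _ (by linarith) (by linarith [ht.1])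
            _ = (2:ℝ≥0∞) ^ d * R := by rw [hRdef]
        calc (∫⁻ x in B, F x t)
            = ∫⁻ y in B, ∫⁻ x in B, H (x + t • (y - x)) := hswap3
          _ ≤ ∫⁻ _ in B, (2:ℝ≥0∞) ^ d * R := lintegral_mono (fun y => hinner y)
          _ = (2:ℝ≥0∞) ^ d * R * volume B := setLIntegral_const _ _
          _ = volume B * ((2:ℝ≥0∞) ^ d * R) := mul_comm _ _
    calc (∫⁻ x in B, ∫⁻ y in B, G x y)
        = ∫⁻ x in B, ∫⁻ t in Icc (0:ℝ) 1, F x t := lintegral_congr (fun x => hswap1 x)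
      _ = ∫⁻ t in Icc (0:ℝ) 1, ∫⁻ x in B, F x t := hswap2
      _ ≤ ∫⁻ _ in Icc (0:ℝ) 1, volume B * ((2:ℝ≥0∞) ^ d * R) :=
          lintegral_mono_ae (ae_restrict_of_forall_mem measurableSet_Icc hbound)
      _ = volume B * ((2:ℝ≥0∞) ^ d * R) * volume (Icc (0:ℝ) 1) := setLIntegral_const _ _
      _ = volume B * ((2:ℝ≥0∞) ^ d * R) := by
          rw [Real.volume_Icc]
          norm_num
  -- final assembly
  have h2ptop : ((2:ℝ≥0∞) ^ p) ≠ ⊤ := ENNReal.rpow_ne_top_of_nonneg hp0 (by norm_num)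
  calc ∫⁻ x in B, ENNReal.ofReal (|u x - c| ^ p * Φ ‖x‖)
      = ∫⁻ x in B, ENNReal.ofReal (|u x - c| ^ p) * w x := by
        refine setLIntegral_congr_fun measurableSet_ball
          (fun x hx => ?_)
        rw [ENNReal.ofReal_mul (by positivity), hwB x hx]
    _ ≤ ∫⁻ x in B, I⁻¹ * (K x * w x) := by
        refine lintegral_mono_ae (ae_restrict_of_forall_mem measurableSet_ball
          (fun x hx => ?_))
        calc ENNReal.ofReal (|u x - c| ^ p) * w x ≤ (I⁻¹ * K x) * w x :=
              mul_le_mul_left (h1 x hx) _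
          _ = I⁻¹ * (K x * w x) := mul_assoc _ _ _
    _ = I⁻¹ * ∫⁻ x in B, K x * w x :=
        lintegral_const_mul' _ _ (ENNReal.inv_ne_top.2 hI0)
    _ ≤ I⁻¹ * ((2:ℝ≥0∞) ^ p * M' * (volume B * ((2:ℝ≥0∞) ^ d * R))) := by
        refine mul_le_mul_right ?_ _
        have hKx : ∀ x ∈ B, K x * w x ≤ (2:ℝ≥0∞) ^ p * M' * ∫⁻ y in B, G x y := by
          intro x hx
          calc K x * w x
              = ∫⁻ y in B, ENNReal.ofReal (|u x - u y| ^ p) * w y * w x := by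
                rw [hKdef]
                exact (lintegral_mul_const' _ _ (hwtop x)).symm
            _ ≤ ∫⁻ y in B, (2:ℝ≥0∞) ^ p * M' * G x y :=
                lintegral_mono_ae (ae_restrict_of_forall_mem measurableSet_ball
                  (fun y hy => h2 x hx y hy))
            _ = (2:ℝ≥0∞) ^ p * M' * ∫⁻ y in B, G x y :=
                lintegral_const_mul' _ _
                  (ENNReal.mul_ne_top h2ptop ENNReal.ofReal_ne_top)
        calc (∫⁻ x in B, K x * w x)
            ≤ ∫⁻ x in B, (2:ℝ≥0∞) ^ p * M' * ∫⁻ y in B, G x y :=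
              lintegral_mono_ae (ae_restrict_of_forall_mem measurableSet_ball hKx)
          _ = (2:ℝ≥0∞) ^ p * M' * ∫⁻ x in B, ∫⁻ y in B, G x y :=
              lintegral_const_mul' _ _
                (ENNReal.mul_ne_top h2ptop ENNReal.ofReal_ne_top)
          _ ≤ (2:ℝ≥0∞) ^ p * M' * (volume B * ((2:ℝ≥0∞) ^ d * R)) :=
              mul_le_mul_right h3 _
    _ = Cbig * R := by
        rw [hCbigdef, hM'def]
        ring
    _ ≤ ENNReal.ofReal (Cbig.toReal + 1) * R := mul_le_mul_left hCbigle _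
    _ = ENNReal.ofReal (Cbig.toReal + 1)
          * ∫⁻ x in B, ENNReal.ofReal (‖fderivWithin ℝ u B x‖ ^ p * Φ ‖x‖) := by rw [hR]
end

section
/- Let (X,ρ) be a metric space with a positive σ-finite Borel measure, fix x0 ∈ X, and assume 0 < |B_{1/2}| and |B_1| < ∞. Let p ≥ 1 and let φ = Φ(ρ(·,x0)) be a radially decreasing weight with 0 < Φ(1/2) and Φ(0) < ∞. Let k : B_1 × B_1 → [0,∞) be a kernel satisfying k(x,y) ≥ c for all x,y ∈ B_1 and some constant c > 0. Then there is a positive constant M depending only on |B_1|, |B_{1/2}|, p and Φ (one may take M = 8^p (|B_1|/|B_{1/2}|) (Φ(0)/Φ(1/2)) · |B_{1/2}|^{-1}) such that ∫_{B_1} |u(x) − u_{B_1}^φ|^p φ(x) dx ≤ (M/c) ∫_{B_1} ∫_{B_1} |u(x) − u(y)|^p k(x,y) (φ(y) ∧ φ(x)) dy dx for every u ∈ L^p(X). -/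
open MeasureTheory Metric Set ENNReal

private lemma aux_holder {α : Type*} [MeasurableSpace α] (ν : Measure α)
    (f w : α → ℝ≥0∞) (hf : AEMeasurable f ν) (hw : AEMeasurable w ν)
    {p : ℝ} (hp : 1 ≤ p) :
    (∫⁻ a, f a * w a ∂ν) ^ p
      ≤ (∫⁻ a, f a ^ p * w a ∂ν) * (∫⁻ a, w a ∂ν) ^ (p - 1) := by
  rcases eq_or_lt_of_le hp with h | h
  · simp [← h]
  · have hp0 : 0 < p := lt_trans zero_lt_one h
    set q := Real.conjExponent p with hqdef
    have hpq : p.HolderConjugate q := Real.HolderConjugate.conjExponent h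
    have hq0 : 0 < q := hpq.symm.pos
    have key := ENNReal.lintegral_mul_le_Lp_mul_Lq ν hpq
      (f := fun a => f a * w a ^ (1 / p)) (g := fun a => w a ^ (1 / q))
      (hf.mul (hw.pow_const _)) (hw.pow_const _)
    have h1 : ∀ a, ((fun a => f a * w a ^ (1 / p)) * fun a => w a ^ (1 / q)) a
        = f a * w a := by
      intro a
      simp only [Pi.mul_apply]
      rw [mul_assoc, ← ENNReal.rpow_add_of_nonneg _ _ (by positivity) (by positivity)]
      rw [show 1 / p + 1 / q = 1 by
        simpa [one_div] using hpq.inv_add_inv_eq_one, ENNReal.rpow_one]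
    have h2 : ∀ a, (f a * w a ^ (1 / p)) ^ p = f a ^ p * w a := by
      intro a
      rw [ENNReal.mul_rpow_of_nonneg _ _ hp0.le, ← ENNReal.rpow_mul,
        one_div, inv_mul_cancel₀ hp0.ne', ENNReal.rpow_one]
    have h3 : ∀ a, (w a ^ (1 / q)) ^ q = w a := by
      intro a
      rw [← ENNReal.rpow_mul, one_div, inv_mul_cancel₀ hq0.ne', ENNReal.rpow_one]
    have key' : ∫⁻ a, f a * w a ∂ν
        ≤ (∫⁻ a, f a ^ p * w a ∂ν) ^ (1 / p) * (∫⁻ a, w a ∂ν) ^ (1 / q) := by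
      calc ∫⁻ a, f a * w a ∂ν
          = ∫⁻ a, ((fun a => f a * w a ^ (1 / p)) * fun a => w a ^ (1 / q)) a ∂ν :=
            lintegral_congr fun a => (h1 a).symm
        _ ≤ (∫⁻ a, (f a * w a ^ (1 / p)) ^ p ∂ν) ^ (1 / p)
            * (∫⁻ a, (w a ^ (1 / q)) ^ q ∂ν) ^ (1 / q) := key
        _ = (∫⁻ a, f a ^ p * w a ∂ν) ^ (1 / p) * (∫⁻ a, w a ∂ν) ^ (1 / q) := by
            rw [lintegral_congr h2, lintegral_congr h3]
    have hkey := ENNReal.rpow_le_rpow key' hp0.le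
    refine le_trans hkey (le_of_eq ?_)
    rw [ENNReal.mul_rpow_of_nonneg _ _ hp0.le, ← ENNReal.rpow_mul, ← ENNReal.rpow_mul,
      one_div, one_div, inv_mul_cancel₀ hp0.ne', ENNReal.rpow_one]
    congr 1
    rw [show q⁻¹ * p = p / q by rw [div_eq_mul_inv, mul_comm], hpq.div_conj_eq_sub_one]

/-- Corollary 3.3. Let `(X,ρ)` be a metric space with a positive
σ-finite Borel measure `μ`, `x0 ∈ X`, `0 < |B_{1/2}|`, `|B_1| < ∞`, `p ≥ 1`, and let
`φ = Φ(ρ(·,x0))` be a radially decreasing weight with `0 < Φ(1/2)`. If the kernel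
`k : B_1 × B_1 → [0,∞)` satisfies `k ≥ c > 0`, then with
`M = 8^p (|B_1|/|B_{1/2}|)(Φ(0)/Φ(1/2)) · |B_{1/2}|⁻¹` one has
`∫_{B_1} |u − u_{B_1}^φ|^p φ ≤ (M/c) ∬_{B_1×B_1} |u(x)−u(y)|^p k(x,y) (φ(y) ∧ φ(x))`
for every `u ∈ L^p(X)`. -/
theorem stmt_4 {X : Type*} [MetricSpace X] [MeasurableSpace X] [BorelSpace X]
    (μ : Measure X) [SigmaFinite μ] (x0 : X)
    (hBhalf : 0 < μ (ball x0 (1/2))) (hBone : μ (ball x0 1) < ⊤)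
    (p : ℝ) (hp : 1 ≤ p)
    (Φ : ℝ → ℝ)
    (hΦnonneg : ∀ r ∈ Ico (0:ℝ) 1, 0 ≤ Φ r)
    (hΦanti : AntitoneOn Φ (Ico (0:ℝ) 1))
    (hΦrc : ∀ r ∈ Ico (0:ℝ) 1, ContinuousWithinAt Φ (Ici r) r)
    (hΦhalf : 0 < Φ (1/2))
    (k : X → X → ℝ) (c : ℝ) (hc : 0 < c)
    (hk : ∀ x ∈ ball x0 1, ∀ y ∈ ball x0 1, c ≤ k x y) :
    ∀ u : X → ℝ, MemLp u (ENNReal.ofReal p) μ →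
      ∫⁻ x in ball x0 1,
          ENNReal.ofReal
            (|u x - (∫ y in ball x0 1, u y * Φ (dist y x0) ∂μ)
                / (∫ y in ball x0 1, Φ (dist y x0) ∂μ)| ^ p
              * Φ (dist x x0)) ∂μ
        ≤ (ENNReal.ofReal (8 ^ p) * (μ (ball x0 1) / μ (ball x0 (1/2)))
              * ENNReal.ofReal (Φ 0 / Φ (1/2)) * (μ (ball x0 (1/2)))⁻¹)
            / ENNReal.ofReal c
          * ∫⁻ x in ball x0 1, ∫⁻ y in ball x0 1,
              ENNReal.ofReal
                (|u x - u y| ^ p * k x y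
                  * min (Φ (dist y x0)) (Φ (dist x x0))) ∂μ ∂μ := by
  intro u hu
  have hp0 : (0:ℝ) ≤ p := le_trans zero_le_one hp
  set B := ball x0 1 with hBdef
  set H := ball x0 (1/2 : ℝ) with hHdef
  have hHB : H ⊆ B := ball_subset_ball (by norm_num)
  have hBmeas : MeasurableSet B := measurableSet_ball
  have hHmeas : MeasurableSet H := measurableSet_ball
  have hμH_lt : μ H < ⊤ := lt_of_le_of_lt (measure_mono hHB) hBone
  haveI : IsFiniteMeasure (μ.restrict B) :=
    ⟨by rw [Measure.restrict_apply_univ]; exact hBone⟩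
  set φ : X → ℝ := fun x => Φ (dist x x0) with hφdef
  have hdist : ∀ x ∈ B, dist x x0 ∈ Ico (0:ℝ) 1 := fun x hx => ⟨dist_nonneg, mem_ball.1 hx⟩
  have h0mem : (0:ℝ) ∈ Ico (0:ℝ) 1 := by norm_num
  have hhalfmem : ((1:ℝ)/2) ∈ Ico (0:ℝ) 1 := by norm_num
  have hφ0 : ∀ x ∈ B, 0 ≤ φ x := fun x hx => hΦnonneg _ (hdist x hx)
  have hφle : ∀ x ∈ B, φ x ≤ Φ 0 := fun x hx => hΦanti h0mem (hdist x hx) dist_nonneg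
  have hφge : ∀ x ∈ H, Φ (1/2) ≤ φ x := fun x hx =>
    hΦanti (hdist x (hHB hx)) hhalfmem (le_of_lt (mem_ball.1 hx))
  have hΦ0pos : 0 < Φ 0 := lt_of_lt_of_le hΦhalf (hΦanti h0mem hhalfmem (by norm_num))
  -- measurability of the weight
  have hφmeas : AEMeasurable φ (μ.restrict B) := by
    have hcont : Continuous fun x : X => dist x x0 := continuous_id.dist continuous_const
    have hg : Measurable (B.indicator φ) := by
      apply measurable_of_Iio
      intro t
      have hS : MeasurableSet {r : ℝ | r ∈ Ico (0:ℝ) 1 ∧ Φ r < t} := by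
        apply Set.OrdConnected.measurableSet
        constructor
        intro a ha b hb r hr
        have hrmem : r ∈ Ico (0:ℝ) 1 :=
          ⟨le_trans ha.1.1 hr.1, lt_of_le_of_lt hr.2 hb.1.2⟩
        exact ⟨hrmem, lt_of_le_of_lt (hΦanti ha.1 hrmem hr.1) ha.2⟩
      have heq : (B.indicator φ) ⁻¹' Iio t =
          ((fun x => dist x x0) ⁻¹' {r : ℝ | r ∈ Ico (0:ℝ) 1 ∧ Φ r < t})
            ∪ (Bᶜ ∩ {_x : X | (0:ℝ) < t}) := by
        ext x
        by_cases hx : x ∈ B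
        · simp only [mem_preimage, mem_Iio, mem_union, mem_inter_iff, mem_compl_iff,
            mem_setOf_eq, Set.indicator_of_mem hx]
          constructor
          · intro h; exact Or.inl ⟨hdist x hx, h⟩
          · rintro (⟨_, h⟩ | ⟨hx', _⟩)
            · exact h
            · exact absurd hx hx'
        · simp only [mem_preimage, mem_Iio, mem_union, mem_inter_iff, mem_compl_iff,
            mem_setOf_eq, Set.indicator_of_notMem hx]
          constructor
          · intro h; exact Or.inr ⟨hx, h⟩
          · rintro (⟨hd, _⟩ | ⟨_, h⟩)
            · exact absurd (mem_ball.2 hd.2) hx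
            · exact h
      rw [heq]
      exact (hcont.measurable hS).union (hBmeas.compl.inter (MeasurableSet.const _))
    have hind : B.indicator φ =ᵐ[μ.restrict B] φ :=
      (ae_restrict_mem hBmeas).mono fun x hx => Set.indicator_of_mem hx φ
    exact hg.aemeasurable.congr hind
  have hφsm : AEStronglyMeasurable φ (μ.restrict B) := hφmeas.aestronglyMeasurable
  have hae : ∀ᵐ x ∂μ.restrict B, x ∈ B := ae_restrict_mem hBmeas
  have hφ0ae : 0 ≤ᵐ[μ.restrict B] φ := hae.mono fun x hx => hφ0 x hx
  -- integrability
  have hφint : Integrable φ (μ.restrict B) := by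
    refine Integrable.mono' (integrable_const (Φ 0)) hφsm ?_
    filter_upwards [hae] with x hx
    rw [Real.norm_eq_abs, abs_of_nonneg (hφ0 x hx)]
    exact hφle x hx
  have huint : Integrable u (μ.restrict B) :=
    (hu.restrict B).integrable (ENNReal.one_le_ofReal.2 hp)
  have huφint : Integrable (fun y => u y * φ y) (μ.restrict B) := by
    have hb : ∀ᵐ y ∂μ.restrict B, ‖φ y‖ ≤ Φ 0 := by
      filter_upwards [hae] with y hy
      rw [Real.norm_eq_abs, abs_of_nonneg (hφ0 y hy)]
      exact hφle y hy
    exact (Integrable.bdd_mul huint hφsm hb).congr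
      (Filter.Eventually.of_forall fun y => mul_comm _ _)
  -- notations
  set W : ℝ := ∫ y in B, φ y ∂μ with hWdef
  set I : ℝ := ∫ y in B, u y * φ y ∂μ with hIdef
  set w : X → ℝ≥0∞ := fun x => ENNReal.ofReal (φ x) with hwdef
  set We : ℝ≥0∞ := ∫⁻ y in B, w y ∂μ with hWedef
  have hWe_eq : ENNReal.ofReal W = We := ofReal_integral_eq_lintegral_ofReal hφint hφ0ae
  have hw_aem : AEMeasurable w (μ.restrict B) := hφmeas.ennreal_ofReal
  -- bounds on We
  have hWe_low : ENNReal.ofReal (Φ (1/2)) * μ H ≤ We := by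
    have h2 : ENNReal.ofReal (Φ (1/2)) * μ H ≤ ∫⁻ y in H, w y ∂μ := by
      rw [← setLIntegral_const H (ENNReal.ofReal (Φ (1/2)))]
      refine lintegral_mono_ae ?_
      filter_upwards [ae_restrict_mem hHmeas] with y hy
      exact ENNReal.ofReal_le_ofReal (hφge y hy)
    exact le_trans h2 (lintegral_mono_set hHB)
  have hWe_pos : 0 < We :=
    lt_of_lt_of_le (ENNReal.mul_pos (ENNReal.ofReal_pos.2 hΦhalf).ne' hBhalf.ne') hWe_low
  have hWe_top : We < ⊤ := by
    calc We ≤ ∫⁻ _x in B, ENNReal.ofReal (Φ 0) ∂μ :=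
        lintegral_mono_ae (hae.mono fun x hx => ENNReal.ofReal_le_ofReal (hφle x hx))
      _ = ENNReal.ofReal (Φ 0) * μ B := setLIntegral_const _ _
      _ < ⊤ := ENNReal.mul_lt_top ENNReal.ofReal_lt_top hBone
  have hWpos : 0 < W := ENNReal.ofReal_pos.1 (hWe_eq ▸ hWe_pos)
  have hu_aem : AEMeasurable u (μ.restrict B) :=
    (hu.restrict B).aestronglyMeasurable.aemeasurable
  set C0 : ℝ≥0∞ := ENNReal.ofReal (Φ 0 / c) with hC0def
  -- the key pointwise estimate
  have hpoint : ∀ x ∈ B,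
      ENNReal.ofReal (|u x - I / W| ^ p * φ x)
        ≤ We⁻¹ * ∫⁻ y in B, C0 * ENNReal.ofReal
            (|u x - u y| ^ p * k x y * min (φ y) (φ x)) ∂μ := by
    intro x hx
    set Gx : ℝ≥0∞ := ∫⁻ y in B, ENNReal.ofReal |u x - u y| * w y ∂μ with hGxdef
    set Sx : ℝ≥0∞ := ∫⁻ y in B, ENNReal.ofReal |u x - u y| ^ p * w y ∂μ with hSxdef
    have hsubint : Integrable (fun y => (u x - u y) * φ y) (μ.restrict B) := by
      have h1 : Integrable (fun y => u x * φ y) (μ.restrict B) := hφint.const_mul (u x)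
      exact (h1.sub huφint).congr (Filter.Eventually.of_forall fun y => by simp only [Pi.sub_apply]; ring)
    have hJint : Integrable (fun y => |u x - u y| * φ y) (μ.restrict B) := by
      refine hsubint.abs.congr ?_
      filter_upwards [hφ0ae] with y hy
      rw [abs_mul, abs_of_nonneg hy]
    set J : ℝ := ∫ y in B, |u x - u y| * φ y ∂μ with hJdef
    have hmean : u x - I / W = (∫ y in B, (u x - u y) * φ y ∂μ) / W := by
      have hsplit : ∫ y in B, (u x - u y) * φ y ∂μ = u x * W - I := by
        rw [show (fun y => (u x - u y) * φ y) = fun y => u x * φ y - u y * φ y from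
          funext fun y => by ring]
        rw [integral_sub (hφint.const_mul (u x)) huφint, integral_const_mul]
      rw [hsplit]
      field_simp
    have hnum : |∫ y in B, (u x - u y) * φ y ∂μ| ≤ J := by
      have h := norm_integral_le_integral_norm (μ := μ.restrict B)
        (fun y => (u x - u y) * φ y)
      rw [Real.norm_eq_abs] at h
      refine h.trans (le_of_eq ?_)
      refine integral_congr_ae ?_
      filter_upwards [hφ0ae] with y hy
      rw [norm_mul, Real.norm_eq_abs, Real.norm_eq_abs, abs_of_nonneg hy]
    have habs : |u x - I / W| ≤ J / W := by
      rw [hmean, abs_div, abs_of_pos hWpos]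
      exact (div_le_div_iff_of_pos_right hWpos).2 hnum
    have hJnn : 0 ≤ᵐ[μ.restrict B] fun y => |u x - u y| * φ y := by
      filter_upwards [hφ0ae] with y hy
      exact mul_nonneg (abs_nonneg _) hy
    have hJof : ENNReal.ofReal J = Gx := by
      rw [hJdef, ofReal_integral_eq_lintegral_ofReal hJint hJnn]
      exact lintegral_congr fun y => ENNReal.ofReal_mul (abs_nonneg _)
    have hF : ENNReal.ofReal |u x - I / W| ≤ Gx / We := by
      calc ENNReal.ofReal |u x - I / W| ≤ ENNReal.ofReal (J / W) :=
            ENNReal.ofReal_le_ofReal habs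
        _ = ENNReal.ofReal J / ENNReal.ofReal W := by rw [ENNReal.ofReal_div_of_pos hWpos]
        _ = Gx / We := by rw [hJof, hWe_eq]
    have hf_aem : AEMeasurable (fun y => ENNReal.ofReal |u x - u y|) (μ.restrict B) := by
      have hsub : AEMeasurable (fun y => u x - u y) (μ.restrict B) :=
        aemeasurable_const.sub hu_aem
      have h := hsub.norm.ennreal_ofReal
      simpa [Real.norm_eq_abs] using h
    have hHolder : Gx ^ p ≤ Sx * We ^ (p - 1) :=
      aux_holder (μ.restrict B) _ _ hf_aem hw_aem hp
    have hWe_rpow_ne0 : We ^ (p - 1) ≠ 0 := (ENNReal.rpow_pos hWe_pos hWe_top.ne).ne'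
    have hWe_rpow_netop : We ^ (p - 1) ≠ ⊤ :=
      ENNReal.rpow_ne_top_of_nonneg (by linarith) hWe_top.ne
    have hsplitW : We ^ p = We ^ (p - 1) * We := by
      have h := ENNReal.rpow_add (p - 1) 1 hWe_pos.ne' hWe_top.ne
      rw [ENNReal.rpow_one, sub_add_cancel] at h
      exact h
    have hFp : ENNReal.ofReal |u x - I / W| ^ p ≤ Sx / We := by
      calc ENNReal.ofReal |u x - I / W| ^ p ≤ (Gx / We) ^ p :=
            ENNReal.rpow_le_rpow hF hp0
        _ = Gx ^ p / We ^ p := ENNReal.div_rpow_of_nonneg _ _ hp0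
        _ ≤ Sx * We ^ (p - 1) / We ^ p := ENNReal.div_le_div_right hHolder _
        _ = Sx / We := by
            rw [hsplitW, mul_comm Sx (We ^ (p - 1)),
              ENNReal.mul_div_mul_left _ _ hWe_rpow_ne0 hWe_rpow_netop]
    calc ENNReal.ofReal (|u x - I / W| ^ p * φ x)
        = ENNReal.ofReal |u x - I / W| ^ p * w x := by
          rw [ENNReal.ofReal_mul (Real.rpow_nonneg (abs_nonneg _) p),
            ENNReal.ofReal_rpow_of_nonneg (abs_nonneg _) hp0]
      _ ≤ (Sx / We) * w x := mul_le_mul_left hFp _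
      _ = We⁻¹ * (Sx * w x) := by rw [div_eq_mul_inv]; ring
      _ = We⁻¹ * ∫⁻ y in B, (ENNReal.ofReal |u x - u y| ^ p * w y) * w x ∂μ := by
          rw [lintegral_mul_const'' (w x) (f := fun y => ENNReal.ofReal |u x - u y| ^ p * w y) ((hf_aem.pow_const p).mul hw_aem)]
      _ ≤ We⁻¹ * ∫⁻ y in B, C0 * ENNReal.ofReal
            (|u x - u y| ^ p * k x y * min (φ y) (φ x)) ∂μ := by
          refine mul_le_mul_right (lintegral_mono_ae ?_) _
          filter_upwards [hae] with y hy
          have hky : c ≤ k x y := hk x hx y hy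
          have hkynn : 0 ≤ k x y := le_trans hc.le hky
          have hmin : ENNReal.ofReal (min (φ y) (φ x)) = min (w y) (w x) := by
            rcases le_total (φ y) (φ x) with h | h
            · rw [min_eq_left h, min_eq_left (ENNReal.ofReal_le_ofReal h)]
            · rw [min_eq_right h, min_eq_right (ENNReal.ofReal_le_ofReal h)]
          have hT : ENNReal.ofReal (|u x - u y| ^ p * k x y * min (φ y) (φ x))
              = ENNReal.ofReal |u x - u y| ^ p * ENNReal.ofReal (k x y)
                  * min (w y) (w x) := by
            rw [ENNReal.ofReal_mul (mul_nonneg (Real.rpow_nonneg (abs_nonneg _) p) hkynn),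
              ENNReal.ofReal_mul (Real.rpow_nonneg (abs_nonneg _) p),
              ENNReal.ofReal_rpow_of_nonneg (abs_nonneg _) hp0, hmin]
          rw [hT]
          have hmax : ENNReal.ofReal (Φ 0) ≤ ENNReal.ofReal (k x y) * C0 := by
            rw [hC0def, ← ENNReal.ofReal_mul hkynn]
            apply ENNReal.ofReal_le_ofReal
            calc Φ 0 = c * (Φ 0 / c) := by field_simp
              _ ≤ k x y * (Φ 0 / c) :=
                  mul_le_mul_of_nonneg_right hky (by positivity)
          have hprod : w y * w x ≤ ENNReal.ofReal (k x y) * C0 * min (w y) (w x) := by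
            rcases le_total (w y) (w x) with h | h
            · rw [min_eq_left h]
              calc w y * w x = w x * w y := mul_comm _ _
                _ ≤ ENNReal.ofReal (Φ 0) * w y :=
                    mul_le_mul_left (ENNReal.ofReal_le_ofReal (hφle x hx)) _
                _ ≤ ENNReal.ofReal (k x y) * C0 * w y := mul_le_mul_left hmax _
            · rw [min_eq_right h]
              calc w y * w x ≤ ENNReal.ofReal (Φ 0) * w x :=
                    mul_le_mul_left (ENNReal.ofReal_le_ofReal (hφle y hy)) _
                _ ≤ ENNReal.ofReal (k x y) * C0 * w x := mul_le_mul_left hmax _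
          calc ENNReal.ofReal |u x - u y| ^ p * w y * w x
              = ENNReal.ofReal |u x - u y| ^ p * (w y * w x) := by rw [mul_assoc]
            _ ≤ ENNReal.ofReal |u x - u y| ^ p
                * (ENNReal.ofReal (k x y) * C0 * min (w y) (w x)) :=
                mul_le_mul_right hprod _
            _ = C0 * (ENNReal.ofReal |u x - u y| ^ p * ENNReal.ofReal (k x y)
                * min (w y) (w x)) := by ring
  -- the constant estimate
  have hconst : We⁻¹ * C0 ≤ (ENNReal.ofReal (8 ^ p) * (μ B / μ H)
      * ENNReal.ofReal (Φ 0 / Φ (1/2)) * (μ H)⁻¹) / ENNReal.ofReal c := by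
    have h1 : We⁻¹ ≤ (ENNReal.ofReal (Φ (1/2)))⁻¹ * (μ H)⁻¹ := by
      rw [← ENNReal.mul_inv (Or.inl (ENNReal.ofReal_pos.2 hΦhalf).ne')
        (Or.inl ENNReal.ofReal_ne_top)]
      exact ENNReal.inv_le_inv' hWe_low
    have h2 : C0 = ENNReal.ofReal (Φ 0) / ENNReal.ofReal c := ENNReal.ofReal_div_of_pos hc
    have h3 : ENNReal.ofReal (Φ 0 / Φ (1/2))
        = ENNReal.ofReal (Φ 0) * (ENNReal.ofReal (Φ (1/2)))⁻¹ := by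
      rw [ENNReal.ofReal_div_of_pos hΦhalf, div_eq_mul_inv]
    have h4 : (1:ℝ≥0∞) ≤ ENNReal.ofReal (8 ^ p) * (μ B / μ H) := by
      have h8 : (1:ℝ≥0∞) ≤ ENNReal.ofReal (8 ^ p) :=
        ENNReal.one_le_ofReal.2 (Real.one_le_rpow (by norm_num) hp0)
      have hd : (1:ℝ≥0∞) ≤ μ B / μ H := by
        rw [ENNReal.le_div_iff_mul_le (Or.inl hBhalf.ne') (Or.inl hμH_lt.ne), one_mul]
        exact measure_mono hHB
      simpa using mul_le_mul' h8 hd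
    calc We⁻¹ * C0
        ≤ ((ENNReal.ofReal (Φ (1/2)))⁻¹ * (μ H)⁻¹)
            * (ENNReal.ofReal (Φ 0) / ENNReal.ofReal c) := by
          rw [h2]; exact mul_le_mul_left h1 _
      _ = (ENNReal.ofReal (Φ 0 / Φ (1/2)) * (μ H)⁻¹) / ENNReal.ofReal c := by
          rw [h3]; simp only [div_eq_mul_inv]; ring
      _ ≤ (ENNReal.ofReal (8 ^ p) * (μ B / μ H) * ENNReal.ofReal (Φ 0 / Φ (1/2))
            * (μ H)⁻¹) / ENNReal.ofReal c := by
          apply ENNReal.div_le_div_right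
          calc ENNReal.ofReal (Φ 0 / Φ (1/2)) * (μ H)⁻¹
              = 1 * (ENNReal.ofReal (Φ 0 / Φ (1/2)) * (μ H)⁻¹) := (one_mul _).symm
            _ ≤ (ENNReal.ofReal (8 ^ p) * (μ B / μ H))
                * (ENNReal.ofReal (Φ 0 / Φ (1/2)) * (μ H)⁻¹) :=
                mul_le_mul_left h4 _
            _ = _ := by ring
  -- main chain
  have hmain : (∫⁻ x in B, ENNReal.ofReal (|u x - I / W| ^ p * φ x) ∂μ)
      ≤ We⁻¹ * C0 * ∫⁻ x in B, ∫⁻ y in B,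
          ENNReal.ofReal (|u x - u y| ^ p * k x y * min (φ y) (φ x)) ∂μ ∂μ := by
    calc ∫⁻ x in B, ENNReal.ofReal (|u x - I / W| ^ p * φ x) ∂μ
        ≤ ∫⁻ x in B, We⁻¹ * ∫⁻ y in B, C0 *
            ENNReal.ofReal (|u x - u y| ^ p * k x y * min (φ y) (φ x)) ∂μ ∂μ := by
          refine lintegral_mono_ae ?_
          filter_upwards [hae] with x hx
          exact hpoint x hx
      _ = We⁻¹ * ∫⁻ x in B, ∫⁻ y in B, C0 *
            ENNReal.ofReal (|u x - u y| ^ p * k x y * min (φ y) (φ x)) ∂μ ∂μ :=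
          lintegral_const_mul' _ _ (ENNReal.inv_ne_top.2 hWe_pos.ne')
      _ = We⁻¹ * (C0 * ∫⁻ x in B, ∫⁻ y in B,
            ENNReal.ofReal (|u x - u y| ^ p * k x y * min (φ y) (φ x)) ∂μ ∂μ) := by
          congr 1
          rw [← lintegral_const_mul' C0 _ ENNReal.ofReal_ne_top]
          exact lintegral_congr fun x => lintegral_const_mul' C0 _ ENNReal.ofReal_ne_top
      _ = _ := by rw [mul_assoc]
  exact hmain.trans (mul_le_mul_left hconst _)
end

section
/- Let R ≥ 1, p ≥ 1 and 0 < s < 1. Then, in ℝ^d with the Lebesgue measure, ∫_{B_1} ∫_{B_1} |u(x) − u(y)|^p |x−y|^{−(d+ps)} dy dx ≤ (3R)^{p(1−s)} ∫_{B_1} ∫_{B_1} |u(x) − u(y)|^p |x−y|^{−(d+ps)} χ_{{|x−y| ≤ 1/R}}(x,y) dy dx for all u ∈ L^p(B_1). -/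
open MeasureTheory Metric Set ENNReal

section Stmt6Aux

open Finset

variable {d : ℕ}

lemma pow_sum_le {N : ℕ} (hN : 1 ≤ N) {p : ℝ} (hp : 1 ≤ p) (a : ℕ → ℝ) (ha : ∀ i, 0 ≤ a i) :
    (∑ i ∈ Finset.range N, a i) ^ p
      ≤ (N : ℝ) ^ (p - 1) * ∑ i ∈ Finset.range N, a i ^ p := by
  have hN0 : (0 : ℝ) < N := by exact_mod_cast hN
  have key := Real.rpow_arith_mean_le_arith_mean_rpow (Finset.range N)
      (fun _ => (N : ℝ)⁻¹) (fun i => (N : ℝ) * a i)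
      (fun i _ => by positivity) ?_ (fun i _ => mul_nonneg (le_of_lt hN0) (ha i)) hp
  · have e1 : ∀ i, (N : ℝ)⁻¹ * ((N : ℝ) * a i) = a i := fun i => by
      field_simp
    have e2 : ∀ i, (N : ℝ)⁻¹ * ((N : ℝ) * a i) ^ p = (N : ℝ) ^ (p - 1) * a i ^ p := fun i => by
      rw [Real.mul_rpow (le_of_lt hN0) (ha i), Real.rpow_sub hN0, Real.rpow_one]
      field_simp
    simp only [e1, e2] at key
    rwa [← Finset.mul_sum] at key
  · rw [Finset.sum_const, Finset.card_range, nsmul_eq_mul]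
    field_simp


lemma chain_real {d : ℕ} {N : ℕ} (hN : 1 ≤ N) {p : ℝ} (hp : 1 ≤ p)
    (v : EuclideanSpace ℝ (Fin d) → ℝ) (x h : EuclideanSpace ℝ (Fin d)) :
    |v (x + h) - v x| ^ p
      ≤ (N : ℝ) ^ (p - 1) *
        ∑ i ∈ Finset.range N,
          |v (x + (((i : ℝ) + 1) / N) • h) - v (x + ((i : ℝ) / N) • h)| ^ p := by
  have hN0 : (0 : ℝ) < N := by exact_mod_cast hN
  set g : ℕ → ℝ := fun i => v (x + ((i : ℝ) / N) • h) with hg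
  have hg0 : g 0 = v x := by simp [hg]
  have hgN : g N = v (x + h) := by
    simp only [hg, div_self (ne_of_gt hN0), one_smul]
  have htel : |v (x + h) - v x| ≤ ∑ i ∈ Finset.range N, |g (i + 1) - g i| := by
    rw [← hgN, ← hg0, ← Finset.sum_range_sub g N]
    exact Finset.abs_sum_le_sum_abs _ _
  have h1 : |v (x + h) - v x| ^ p ≤ (∑ i ∈ Finset.range N, |g (i + 1) - g i|) ^ p :=
    Real.rpow_le_rpow (abs_nonneg _) htel (by linarith)
  refine h1.trans ?_
  have h2 := pow_sum_le hN hp (fun i => |g (i + 1) - g i|) (fun i => abs_nonneg _)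
  refine h2.trans (le_of_eq ?_)
  congr 1
  refine Finset.sum_congr rfl fun i _ => ?_
  simp only [hg]
  push_cast
  ring_nf

lemma ind_mul {α : Type*} (B : Set α) (g : α → ℝ≥0∞) (x : α) :
    B.indicator g x = B.indicator 1 x * g x := by
  by_cases h : x ∈ B <;> simp [h]


lemma lint_scale {d : ℕ} (f : EuclideanSpace ℝ (Fin d) → ℝ≥0∞) {r : ℝ} (hr : r ≠ 0) :
    ∫⁻ x, f (r • x) = ENNReal.ofReal |(r ^ d)⁻¹| * ∫⁻ x, f x := by
  have h := lintegral_map_equiv (μ := (volume : Measure (EuclideanSpace ℝ (Fin d)))) f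
    (Homeomorph.smul (isUnit_iff_ne_zero.2 hr).unit).toMeasurableEquiv
  have hcoe : ⇑(Homeomorph.smul (isUnit_iff_ne_zero.2 hr).unit).toMeasurableEquiv
      = (fun x => r • x : EuclideanSpace ℝ (Fin d) → EuclideanSpace ℝ (Fin d)) := by
    funext x
    simp [Homeomorph.smul, Units.smul_def]
  rw [hcoe] at h
  rw [← h, Measure.map_addHaar_smul volume hr, lintegral_smul_measure,
    finrank_euclideanSpace_fin, smul_eq_mul]


lemma lemA {d : ℕ} (f : EuclideanSpace ℝ (Fin d) → EuclideanSpace ℝ (Fin d) → ℝ≥0∞)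
    (hf : Measurable (Function.uncurry f)) :
    ∫⁻ x in ball (0 : EuclideanSpace ℝ (Fin d)) 1,
        ∫⁻ y in ball (0 : EuclideanSpace ℝ (Fin d)) 1, f x y
      = ∫⁻ h, ∫⁻ x,
          (ball (0 : EuclideanSpace ℝ (Fin d)) 1).indicator 1 x *
          ((ball (0 : EuclideanSpace ℝ (Fin d)) 1).indicator 1 (x + h) * f x (x + h)) := by
  set B := ball (0 : EuclideanSpace ℝ (Fin d)) 1 with hB
  have hBm : MeasurableSet B := measurableSet_ball
  have inner : ∀ x, ∫⁻ y in B, f x y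
      = ∫⁻ h, B.indicator 1 (x + h) * f x (x + h) := by
    intro x
    rw [← lintegral_indicator hBm (f x)]
    rw [← lintegral_add_left_eq_self (fun y => B.indicator (f x) y) x]
    exact lintegral_congr fun h => ind_mul B (f x) (x + h)
  calc ∫⁻ x in B, ∫⁻ y in B, f x y
      = ∫⁻ x, B.indicator (fun x => ∫⁻ y in B, f x y) x := by
        rw [lintegral_indicator hBm]
    _ = ∫⁻ x, B.indicator 1 x * ∫⁻ h, B.indicator 1 (x + h) * f x (x + h) := by
        refine lintegral_congr fun x => ?_
        rw [ind_mul, inner x]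
    _ = ∫⁻ x, ∫⁻ h, B.indicator 1 x * (B.indicator 1 (x + h) * f x (x + h)) := by
        refine lintegral_congr fun x => ?_
        rw [← lintegral_const_mul' _ _ ?_]
        · by_cases h : x ∈ B <;> simp [h]
    _ = ∫⁻ h, ∫⁻ x, B.indicator 1 x * (B.indicator 1 (x + h) * f x (x + h)) := by
        apply lintegral_lintegral_swap
        apply Measurable.aemeasurable
        have h1 : Measurable fun q : EuclideanSpace ℝ (Fin d) × EuclideanSpace ℝ (Fin d) =>
            B.indicator (1 : EuclideanSpace ℝ (Fin d) → ℝ≥0∞) q.1 :=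
          (measurable_one.indicator hBm).comp measurable_fst
        have h2 : Measurable fun q : EuclideanSpace ℝ (Fin d) × EuclideanSpace ℝ (Fin d) =>
            q.1 + q.2 := measurable_fst.add measurable_snd
        have h3 : Measurable fun q : EuclideanSpace ℝ (Fin d) × EuclideanSpace ℝ (Fin d) =>
            f q.1 (q.1 + q.2) := hf.comp (measurable_fst.prodMk h2)
        exact h1.mul (((measurable_one.indicator hBm).comp h2).mul h3)

lemma chainPhi {d : ℕ} {N : ℕ} (hN : 1 ≤ N) {p : ℝ} (hp : 1 ≤ p)
    (v : EuclideanSpace ℝ (Fin d) → ℝ) (hv : Measurable v) (h : EuclideanSpace ℝ (Fin d)) :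
    (∫⁻ x, (ball (0 : EuclideanSpace ℝ (Fin d)) 1).indicator 1 x *
        ((ball (0 : EuclideanSpace ℝ (Fin d)) 1).indicator 1 (x + h) *
          ENNReal.ofReal (|v (x + h) - v x| ^ p)))
      ≤ (ball (0 : EuclideanSpace ℝ (Fin d)) 2).indicator 1 h *
        ((N : ℝ≥0∞) * (ENNReal.ofReal ((N : ℝ) ^ (p - 1)) *
          ∫⁻ x, (ball (0 : EuclideanSpace ℝ (Fin d)) 1).indicator 1 x *
            ((ball (0 : EuclideanSpace ℝ (Fin d)) 1).indicator 1 (x + (N : ℝ)⁻¹ • h) *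
              ENNReal.ofReal (|v (x + (N : ℝ)⁻¹ • h) - v x| ^ p)))) := by
  classical
  have hN0 : (0 : ℝ) < N := by exact_mod_cast hN
  set B := ball (0 : EuclideanSpace ℝ (Fin d)) 1 with hBdef
  set k : EuclideanSpace ℝ (Fin d) := (N : ℝ)⁻¹ • h with hkdef
  set F : EuclideanSpace ℝ (Fin d) → ℝ≥0∞ := fun z =>
    B.indicator 1 z * (B.indicator 1 (z + k) * ENNReal.ofReal (|v (z + k) - v z| ^ p))
    with hFdef
  by_cases hh : h ∈ ball (0 : EuclideanSpace ℝ (Fin d)) 2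
  · rw [Set.indicator_of_mem hh, Pi.one_apply, one_mul]
    set c : ℝ≥0∞ := ENNReal.ofReal ((N : ℝ) ^ (p - 1)) with hcdef
    have ptw : ∀ x, B.indicator 1 x * (B.indicator 1 (x + h) *
        ENNReal.ofReal (|v (x + h) - v x| ^ p))
        ≤ ∑ i ∈ Finset.range N, c * F (x + ((i : ℝ) / N) • h) := by
      intro x
      by_cases hx : x ∈ B
      · by_cases hxh : x + h ∈ B
        · simp only [Set.indicator_of_mem hx, Set.indicator_of_mem hxh, Pi.one_apply, one_mul]
          have hseg : ∀ t : ℝ, 0 ≤ t → t ≤ 1 → x + t • h ∈ B := by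
            intro t ht0 ht1
            have hc := (convex_ball (0 : EuclideanSpace ℝ (Fin d)) 1) hx hxh
              (by linarith : (0:ℝ) ≤ 1 - t) ht0 (by ring)
            have : (1 - t) • x + t • (x + h) = x + t • h := by
              rw [smul_add, sub_smul, one_smul]; abel
            rwa [this] at hc
          have hpoint : ∀ i : ℕ, x + ((i : ℝ) / N) • h + k = x + (((i : ℝ) + 1) / N) • h := by
            intro i
            rw [hkdef, add_assoc, ← add_smul]
            congr 2
            field_simp
          have Feq : ∀ i ∈ Finset.range N, F (x + ((i : ℝ) / N) • h)
              = ENNReal.ofReal (|v (x + (((i : ℝ) + 1) / N) • h) - v (x + ((i : ℝ) / N) • h)| ^ p) := by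
            intro i hi
            have hiN : (i : ℝ) < N := by exact_mod_cast Finset.mem_range.mp hi
            have m1 : x + ((i : ℝ) / N) • h ∈ B :=
              hseg _ (by positivity) (by rw [div_le_one hN0]; linarith)
            have hiN1 : (i : ℝ) + 1 ≤ N := by
              exact_mod_cast Nat.succ_le_of_lt (Finset.mem_range.mp hi)
            have m2 : x + ((i : ℝ) / N) • h + k ∈ B := by
              rw [hpoint i]
              exact hseg _ (by positivity) (by rw [div_le_one hN0]; linarith)
            rw [hFdef]
            simp only [Set.indicator_of_mem m1, Set.indicator_of_mem m2, Pi.one_apply, one_mul]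
            rw [hpoint i]
          calc ENNReal.ofReal (|v (x + h) - v x| ^ p)
              ≤ ENNReal.ofReal ((N : ℝ) ^ (p - 1) *
                  ∑ i ∈ Finset.range N,
                    |v (x + (((i : ℝ) + 1) / N) • h) - v (x + ((i : ℝ) / N) • h)| ^ p) :=
                ENNReal.ofReal_le_ofReal (chain_real hN hp v x h)
            _ = c * ∑ i ∈ Finset.range N,
                  ENNReal.ofReal (|v (x + (((i : ℝ) + 1) / N) • h) - v (x + ((i : ℝ) / N) • h)| ^ p) := by
                rw [ENNReal.ofReal_mul (by positivity),
                  ENNReal.ofReal_sum_of_nonneg (fun i _ => by positivity)]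
            _ = ∑ i ∈ Finset.range N, c *
                  ENNReal.ofReal (|v (x + (((i : ℝ) + 1) / N) • h) - v (x + ((i : ℝ) / N) • h)| ^ p) := by
                rw [Finset.mul_sum]
            _ = ∑ i ∈ Finset.range N, c * F (x + ((i : ℝ) / N) • h) := by
                refine Finset.sum_congr rfl fun i hi => ?_
                rw [Feq i hi]
        · simp [Set.indicator_of_notMem hxh]
      · simp [Set.indicator_of_notMem hx]
    have hFmeas : Measurable F := by
      have hvk : Measurable fun z : EuclideanSpace ℝ (Fin d) => v (z + k) :=
        hv.comp (measurable_id.add_const k)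
      have h1 : Measurable fun z : EuclideanSpace ℝ (Fin d) =>
          ENNReal.ofReal (|v (z + k) - v z| ^ p) :=
        (((Real.continuous_rpow_const (by linarith : (0:ℝ) ≤ p)).measurable.comp
          ((hvk.sub hv).abs)).ennreal_ofReal)
      exact ((measurable_one.indicator measurableSet_ball)).mul
        (((measurable_one.indicator measurableSet_ball).comp
          (measurable_id.add_const k)).mul h1)
    calc (∫⁻ x, B.indicator 1 x * (B.indicator 1 (x + h) *
            ENNReal.ofReal (|v (x + h) - v x| ^ p)))
        ≤ ∫⁻ x, ∑ i ∈ Finset.range N, c * F (x + ((i : ℝ) / N) • h) := lintegral_mono ptw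
      _ = ∑ i ∈ Finset.range N, ∫⁻ x, c * F (x + ((i : ℝ) / N) • h) := by
          refine lintegral_finset_sum _ fun i _ => ?_
          exact (hFmeas.comp (measurable_id.add_const _)).const_mul c
      _ = ∑ i ∈ Finset.range N, c * ∫⁻ x, F (x + ((i : ℝ) / N) • h) := by
          refine Finset.sum_congr rfl fun i _ => ?_
          exact lintegral_const_mul' _ _ ENNReal.ofReal_ne_top
      _ = ∑ i ∈ Finset.range N, c * ∫⁻ x, F x := by
          refine Finset.sum_congr rfl fun i _ => ?_
          rw [lintegral_add_right_eq_self F _]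
      _ = (N : ℝ≥0∞) * (c * ∫⁻ x, F x) := by
          rw [Finset.sum_const, Finset.card_range, nsmul_eq_mul]
  · rw [Set.indicator_of_notMem hh, zero_mul, le_zero_iff]
    have hz : ∀ x, B.indicator 1 x * ((B.indicator 1 (x + h)) *
        ENNReal.ofReal (|v (x + h) - v x| ^ p)) = 0 := by
      intro x
      by_cases hx : x ∈ B
      · have hxh : x + h ∉ B := by
          intro hmem
          apply hh
          rw [mem_ball_zero_iff]
          have h1 : ‖x + h‖ < 1 := mem_ball_zero_iff.mp hmem
          have h2 : ‖x‖ < 1 := mem_ball_zero_iff.mp hx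
          have : h = (x + h) - x := by abel
          rw [this]
          calc ‖(x + h) - x‖ ≤ ‖x + h‖ + ‖x‖ := norm_sub_le _ _
            _ < 2 := by linarith
        simp [Set.indicator_of_notMem hxh]
      · simp [Set.indicator_of_notMem hx]
    calc (∫⁻ x, B.indicator 1 x * (B.indicator 1 (x + h) *
            ENNReal.ofReal (|v (x + h) - v x| ^ p)))
        = ∫⁻ _x : EuclideanSpace ℝ (Fin d), (0:ℝ≥0∞) := lintegral_congr fun x => hz x
      _ = 0 := lintegral_zero

theorem core (R p s : ℝ) (hR : 1 ≤ R) (hp : 1 ≤ p)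
    (hs0 : 0 < s) (hs1 : s < 1)
    (v : EuclideanSpace ℝ (Fin d) → ℝ) (hv : Measurable v) :
    ∫⁻ x in ball (0 : EuclideanSpace ℝ (Fin d)) 1,
        ∫⁻ y in ball (0 : EuclideanSpace ℝ (Fin d)) 1,
          ENNReal.ofReal (|v x - v y| ^ p)
            / ENNReal.ofReal (‖x - y‖ ^ ((d : ℝ) + p * s))
      ≤ ENNReal.ofReal ((3 * R) ^ (p * (1 - s)))
        * ∫⁻ x in ball (0 : EuclideanSpace ℝ (Fin d)) 1,
            ∫⁻ y in ball (0 : EuclideanSpace ℝ (Fin d)) 1,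
              (if ‖x - y‖ ≤ 1 / R then
                ENNReal.ofReal (|v x - v y| ^ p)
                  / ENNReal.ofReal (‖x - y‖ ^ ((d : ℝ) + p * s))
              else 0) := by
  classical
  have hp0 : (0 : ℝ) < p := by linarith
  have hR0 : (0 : ℝ) < R := by linarith
  set c : ℝ := (d : ℝ) + p * s with hcdef
  have hc0 : 0 < c := by positivity
  set N : ℕ := ⌈2 * R⌉₊ with hNdef
  have hN2R : 2 * R ≤ (N : ℝ) := Nat.le_ceil _
  have hN1 : 1 ≤ N := by
    rw [hNdef, Nat.one_le_ceil_iff]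
    positivity
  have hN0 : (0 : ℝ) < N := by exact_mod_cast hN1
  have hN3R : (N : ℝ) ≤ 3 * R := by
    have := Nat.ceil_lt_add_one (by positivity : (0:ℝ) ≤ 2 * R)
    rw [← hNdef] at this
    linarith
  set B := ball (0 : EuclideanSpace ℝ (Fin d)) 1 with hBdef
  set K : EuclideanSpace ℝ (Fin d) → ℝ≥0∞ := fun h => ENNReal.ofReal (‖h‖ ^ c) with hKdef
  set Φ : EuclideanSpace ℝ (Fin d) → ℝ≥0∞ := fun k =>
    ∫⁻ x, B.indicator 1 x * (B.indicator 1 (x + k) * ENNReal.ofReal (|v (x + k) - v x| ^ p))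
    with hPhidef
  -- measurability of the two kernels
  have mnorm : Measurable fun q : EuclideanSpace ℝ (Fin d) × EuclideanSpace ℝ (Fin d) =>
      ENNReal.ofReal (‖q.1 - q.2‖ ^ c) := by
    refine Measurable.ennreal_ofReal ?_
    exact ((continuous_fst.sub continuous_snd).norm.rpow_const
      (fun q => Or.inr (le_of_lt hc0))).measurable
  have mnum : Measurable fun q : EuclideanSpace ℝ (Fin d) × EuclideanSpace ℝ (Fin d) =>
      ENNReal.ofReal (|v q.1 - v q.2| ^ p) := by
    refine Measurable.ennreal_ofReal ?_
    exact (Real.continuous_rpow_const (by linarith : (0:ℝ) ≤ p)).measurable.comp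
      (((hv.comp measurable_fst).sub (hv.comp measurable_snd)).abs)
  have mf1 : Measurable (Function.uncurry (fun x y : EuclideanSpace ℝ (Fin d) =>
      ENNReal.ofReal (|v x - v y| ^ p) / ENNReal.ofReal (‖x - y‖ ^ c))) :=
    mnum.div mnorm
  have mf2 : Measurable (Function.uncurry (fun x y : EuclideanSpace ℝ (Fin d) =>
      if ‖x - y‖ ≤ 1 / R then
        ENNReal.ofReal (|v x - v y| ^ p) / ENNReal.ofReal (‖x - y‖ ^ c) else 0)) := by
    refine Measurable.ite ?_ (mnum.div mnorm) measurable_const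
    exact measurableSet_le ((continuous_fst.sub continuous_snd).norm).measurable measurable_const
  -- the "pull the kernel out" identity
  have pull : ∀ h : EuclideanSpace ℝ (Fin d),
      (∫⁻ x, B.indicator 1 x * (B.indicator 1 (x + h) *
        (ENNReal.ofReal (|v (x + h) - v x| ^ p) * (K h)⁻¹)))
      = Φ h * (K h)⁻¹ := by
    intro h
    by_cases h0 : h = 0
    · subst h0
      have hz : ∀ x : EuclideanSpace ℝ (Fin d),
          ENNReal.ofReal (|v (x + 0) - v x| ^ p) = 0 := by
        intro x
        simp [Real.zero_rpow (ne_of_gt hp0)]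
      have l : Φ 0 = 0 := by
        rw [hPhidef]
        simp only [hz, mul_zero]
        exact lintegral_zero
      rw [l, zero_mul]
      simp only [hz, zero_mul, mul_zero]
      exact lintegral_zero
    · have hK0 : K h ≠ 0 := by
        rw [hKdef]
        simp only [ne_eq, ENNReal.ofReal_eq_zero, not_le]
        have : 0 < ‖h‖ := norm_pos_iff.mpr h0
        positivity
      have hKinv : (K h)⁻¹ ≠ ⊤ := ENNReal.inv_ne_top.mpr hK0
      calc (∫⁻ x, B.indicator 1 x * (B.indicator 1 (x + h) *
              (ENNReal.ofReal (|v (x + h) - v x| ^ p) * (K h)⁻¹)))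
          = ∫⁻ x, (B.indicator 1 x * (B.indicator 1 (x + h) *
              ENNReal.ofReal (|v (x + h) - v x| ^ p))) * (K h)⁻¹ := by
            refine lintegral_congr fun x => ?_
            ring
        _ = Φ h * (K h)⁻¹ := lintegral_mul_const' _ _ hKinv
  -- rewrite LHS in difference form
  have LHSeq : (∫⁻ x in B, ∫⁻ y in B,
        ENNReal.ofReal (|v x - v y| ^ p) / ENNReal.ofReal (‖x - y‖ ^ c))
      = ∫⁻ h, Φ h * (K h)⁻¹ := by
    calc (∫⁻ x in B, ∫⁻ y in B,
          ENNReal.ofReal (|v x - v y| ^ p) / ENNReal.ofReal (‖x - y‖ ^ c))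
        = ∫⁻ h, ∫⁻ x, B.indicator 1 x * (B.indicator 1 (x + h) *
            (ENNReal.ofReal (|v x - v (x + h)| ^ p)
              / ENNReal.ofReal (‖x - (x + h)‖ ^ c))) :=
          lemA (fun x y => ENNReal.ofReal (|v x - v y| ^ p)
            / ENNReal.ofReal (‖x - y‖ ^ c)) mf1
      _ = ∫⁻ h, Φ h * (K h)⁻¹ := by
          refine lintegral_congr fun h => ?_
          calc (∫⁻ x, B.indicator 1 x * (B.indicator 1 (x + h) *
                (ENNReal.ofReal (|v x - v (x + h)| ^ p)
                  / ENNReal.ofReal (‖x - (x + h)‖ ^ c))))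
              = ∫⁻ x, B.indicator 1 x * (B.indicator 1 (x + h) *
                (ENNReal.ofReal (|v (x + h) - v x| ^ p) * (K h)⁻¹)) := by
                refine lintegral_congr fun x => ?_
                rw [abs_sub_comm (v x), show x - (x + h) = -h from by abel, norm_neg,
                  div_eq_mul_inv]
            _ = Φ h * (K h)⁻¹ := pull h
  -- rewrite RHS in difference form
  have RHSeq : (∫⁻ x in B, ∫⁻ y in B,
        (if ‖x - y‖ ≤ 1 / R then
          ENNReal.ofReal (|v x - v y| ^ p) / ENNReal.ofReal (‖x - y‖ ^ c) else 0))
      = ∫⁻ h, (if ‖h‖ ≤ 1 / R then Φ h * (K h)⁻¹ else 0) := by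
    calc (∫⁻ x in B, ∫⁻ y in B,
          (if ‖x - y‖ ≤ 1 / R then
            ENNReal.ofReal (|v x - v y| ^ p) / ENNReal.ofReal (‖x - y‖ ^ c) else 0))
        = ∫⁻ h, ∫⁻ x, B.indicator 1 x * (B.indicator 1 (x + h) *
            (if ‖x - (x + h)‖ ≤ 1 / R then
              ENNReal.ofReal (|v x - v (x + h)| ^ p)
                / ENNReal.ofReal (‖x - (x + h)‖ ^ c) else 0)) :=
          lemA (fun x y => if ‖x - y‖ ≤ 1 / R then
            ENNReal.ofReal (|v x - v y| ^ p) / ENNReal.ofReal (‖x - y‖ ^ c) else 0) mf2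
      _ = ∫⁻ h, (if ‖h‖ ≤ 1 / R then Φ h * (K h)⁻¹ else 0) := by
          refine lintegral_congr fun h => ?_
          by_cases hC : ‖h‖ ≤ 1 / R
          · rw [if_pos hC]
            calc (∫⁻ x, B.indicator 1 x * (B.indicator 1 (x + h) *
                  (if ‖x - (x + h)‖ ≤ 1 / R then
                    ENNReal.ofReal (|v x - v (x + h)| ^ p)
                      / ENNReal.ofReal (‖x - (x + h)‖ ^ c) else 0)))
                = ∫⁻ x, B.indicator 1 x * (B.indicator 1 (x + h) *
                  (ENNReal.ofReal (|v (x + h) - v x| ^ p) * (K h)⁻¹)) := by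
                  refine lintegral_congr fun x => ?_
                  rw [show x - (x + h) = -h from by abel, norm_neg, if_pos hC,
                    abs_sub_comm (v x), div_eq_mul_inv]
              _ = Φ h * (K h)⁻¹ := pull h
          · rw [if_neg hC]
            calc (∫⁻ x, B.indicator 1 x * (B.indicator 1 (x + h) *
                  (if ‖x - (x + h)‖ ≤ 1 / R then
                    ENNReal.ofReal (|v x - v (x + h)| ^ p)
                      / ENNReal.ofReal (‖x - (x + h)‖ ^ c) else 0)))
                = ∫⁻ _x : EuclideanSpace ℝ (Fin d), (0:ℝ≥0∞) := by
                  refine lintegral_congr fun x => ?_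
                  rw [show x - (x + h) = -h from by abel, norm_neg, if_neg hC,
                    mul_zero, mul_zero]
              _ = 0 := lintegral_zero
  rw [LHSeq, RHSeq]
  -- notation for constants
  set cN : ℝ≥0∞ := ENNReal.ofReal ((N : ℝ) ^ (p - 1)) with hcNdef
  set a : ℝ≥0∞ := ENNReal.ofReal (((N : ℝ)⁻¹) ^ c) with hadef
  have ha0 : a ≠ 0 := by
    rw [hadef]
    simp only [ne_eq, ENNReal.ofReal_eq_zero, not_le]
    positivity
  have haT : a ≠ ⊤ := ENNReal.ofReal_ne_top
  have cancel : a * a⁻¹ = 1 := ENNReal.mul_inv_cancel ha0 haT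
  set D' := (ball (0 : EuclideanSpace ℝ (Fin d)) (2 / (N : ℝ))).indicator
    (1 : EuclideanSpace ℝ (Fin d) → ℝ≥0∞) with hD'def
  set G : EuclideanSpace ℝ (Fin d) → ℝ≥0∞ := fun w => D' w * (Φ w * (K w)⁻¹) with hGdef
  set J : ℝ≥0∞ := ∫⁻ h, (if ‖h‖ ≤ 1 / R then Φ h * (K h)⁻¹ else 0) with hJdef
  -- pointwise chain bound
  have step1 : ∀ h : EuclideanSpace ℝ (Fin d),
      Φ h * (K h)⁻¹ ≤ ((N : ℝ≥0∞) * cN * a) * G ((N : ℝ)⁻¹ • h) := by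
    intro h
    have hKsplit : (K ((N : ℝ)⁻¹ • h))⁻¹ = a⁻¹ * (K h)⁻¹ := by
      have e1 : ‖(N : ℝ)⁻¹ • h‖ ^ c = ((N : ℝ)⁻¹) ^ c * ‖h‖ ^ c := by
        rw [norm_smul, norm_inv, Real.norm_natCast,
          Real.mul_rpow (by positivity) (norm_nonneg _)]
      show (ENNReal.ofReal (‖(N : ℝ)⁻¹ • h‖ ^ c))⁻¹ = a⁻¹ * (K h)⁻¹
      rw [e1, ENNReal.ofReal_mul (by positivity), ← hadef,
        ENNReal.mul_inv (Or.inl ha0) (Or.inl haT)]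
    have hD'eq : D' ((N : ℝ)⁻¹ • h)
        = (ball (0 : EuclideanSpace ℝ (Fin d)) 2).indicator 1 h := by
      have hmem : ((N : ℝ)⁻¹ • h ∈ ball (0 : EuclideanSpace ℝ (Fin d)) (2 / (N : ℝ)))
          ↔ h ∈ ball (0 : EuclideanSpace ℝ (Fin d)) 2 := by
        simp only [mem_ball_zero_iff, norm_smul, norm_inv, Real.norm_natCast]
        rw [div_eq_inv_mul]
        exact mul_lt_mul_iff_right₀ (by positivity)
      by_cases h2 : h ∈ ball (0 : EuclideanSpace ℝ (Fin d)) 2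
      · rw [hD'def, Set.indicator_of_mem (hmem.mpr h2), Set.indicator_of_mem h2]
        simp
      · rw [hD'def, Set.indicator_of_notMem (fun hm => h2 (hmem.mp hm)),
          Set.indicator_of_notMem h2]
    have hchain := chainPhi hN1 hp v hv h
    have hmul := mul_le_mul_left hchain (K h)⁻¹
    refine hmul.trans (le_of_eq ?_)
    calc ((ball (0 : EuclideanSpace ℝ (Fin d)) 2).indicator 1 h *
            ((N : ℝ≥0∞) * (cN * Φ ((N : ℝ)⁻¹ • h)))) * (K h)⁻¹
        = ((N : ℝ≥0∞) * cN * 1) *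
            ((ball (0 : EuclideanSpace ℝ (Fin d)) 2).indicator 1 h *
              (Φ ((N : ℝ)⁻¹ • h) * (K h)⁻¹)) := by ring
      _ = ((N : ℝ≥0∞) * cN * (a * a⁻¹)) *
            ((ball (0 : EuclideanSpace ℝ (Fin d)) 2).indicator 1 h *
              (Φ ((N : ℝ)⁻¹ • h) * (K h)⁻¹)) := by rw [cancel]
      _ = ((N : ℝ≥0∞) * cN * a) *
            ((ball (0 : EuclideanSpace ℝ (Fin d)) 2).indicator 1 h *
              (Φ ((N : ℝ)⁻¹ • h) * (a⁻¹ * (K h)⁻¹))) := by ring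
      _ = ((N : ℝ≥0∞) * cN * a) * G ((N : ℝ)⁻¹ • h) := by
          rw [hGdef]
          simp only
          rw [hD'eq, hKsplit]
  -- combine
  have hconstT : (N : ℝ≥0∞) * cN * a ≠ ⊤ :=
    ENNReal.mul_ne_top (ENNReal.mul_ne_top (ENNReal.natCast_ne_top N)
      ENNReal.ofReal_ne_top) haT
  have intG_le : (∫⁻ w, G w) ≤ J := by
    rw [hJdef]
    refine lintegral_mono fun w => ?_
    by_cases hw : w ∈ ball (0 : EuclideanSpace ℝ (Fin d)) (2 / (N : ℝ))
    · have hle : ‖w‖ ≤ 1 / R := by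
        have h1 : ‖w‖ < 2 / (N : ℝ) := mem_ball_zero_iff.mp hw
        have h2 : 2 / (N : ℝ) ≤ 1 / R := by
          rw [div_le_div_iff₀ hN0 hR0]
          linarith
        linarith
      rw [hGdef]
      simp only
      rw [hD'def, Set.indicator_of_mem hw, Pi.one_apply, one_mul, if_pos hle]
    · rw [hGdef]
      simp only
      rw [hD'def, Set.indicator_of_notMem hw, zero_mul]
      exact zero_le
  calc (∫⁻ h, Φ h * (K h)⁻¹)
      ≤ ∫⁻ h, ((N : ℝ≥0∞) * cN * a) * G ((N : ℝ)⁻¹ • h) := lintegral_mono step1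
    _ = ((N : ℝ≥0∞) * cN * a) * ∫⁻ h, G ((N : ℝ)⁻¹ • h) :=
        lintegral_const_mul' _ _ hconstT
    _ = ((N : ℝ≥0∞) * cN * a) *
          (ENNReal.ofReal |(((N : ℝ)⁻¹) ^ d)⁻¹| * ∫⁻ w, G w) := by
        rw [lint_scale G (inv_ne_zero (ne_of_gt hN0))]
    _ = (((N : ℝ≥0∞) * cN * a) * ENNReal.ofReal |(((N : ℝ)⁻¹) ^ d)⁻¹|) * ∫⁻ w, G w := by
        ring
    _ ≤ ENNReal.ofReal ((3 * R) ^ (p * (1 - s))) * J := by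
        refine mul_le_mul' ?_ intG_le
        have habs : |(((N : ℝ)⁻¹) ^ d)⁻¹| = (N : ℝ) ^ d := by
          rw [inv_pow, inv_inv, abs_of_pos (by positivity)]
        rw [habs, hcNdef, hadef, ← ENNReal.ofReal_natCast N,
          ← ENNReal.ofReal_mul (by positivity), ← ENNReal.ofReal_mul (by positivity),
          ← ENNReal.ofReal_mul (by positivity)]
        refine ENNReal.ofReal_le_ofReal ?_
        have hexp : p * (1 - s) = (1 : ℝ) + (p - 1) + -c + (d : ℝ) := by
          rw [hcdef]; push_cast; ring
        have hNval : (N : ℝ) * (N : ℝ) ^ (p - 1) * ((N : ℝ)⁻¹) ^ c * (N : ℝ) ^ d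
            = (N : ℝ) ^ (p * (1 - s)) := by
          rw [hexp, Real.rpow_add hN0, Real.rpow_add hN0, Real.rpow_add hN0,
            Real.rpow_one, Real.rpow_natCast,
            Real.rpow_neg (le_of_lt hN0), ← Real.inv_rpow (le_of_lt hN0)]
        rw [hNval]
        exact Real.rpow_le_rpow (le_of_lt hN0) hN3R
          (mul_nonneg (le_of_lt hp0) (by linarith))
end Stmt6Aux

/-- Lemma 3.5. Let `R ≥ 1`, `p ≥ 1` and `0 < s < 1`. Then, in `ℝ^d`
with the Lebesgue measure,
`∬_{B_1×B_1} |u(x)−u(y)|^p |x−y|^{−(d+ps)} dy dx`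
`≤ (3R)^{p(1−s)} ∬_{B_1×B_1} |u(x)−u(y)|^p |x−y|^{−(d+ps)} χ_{{|x−y| ≤ 1/R}} dy dx`
for all `u ∈ L^p(B_1)`. -/
theorem stmt_6 (d : ℕ) (R p s : ℝ) (hR : 1 ≤ R) (hp : 1 ≤ p)
    (hs0 : 0 < s) (hs1 : s < 1)
    (u : EuclideanSpace ℝ (Fin d) → ℝ)
    (hu : MemLp u (ENNReal.ofReal p)
      (volume.restrict (ball (0 : EuclideanSpace ℝ (Fin d)) 1))) :
    ∫⁻ x in ball (0 : EuclideanSpace ℝ (Fin d)) 1,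
        ∫⁻ y in ball (0 : EuclideanSpace ℝ (Fin d)) 1,
          ENNReal.ofReal (|u x - u y| ^ p)
            / ENNReal.ofReal (‖x - y‖ ^ ((d : ℝ) + p * s))
      ≤ ENNReal.ofReal ((3 * R) ^ (p * (1 - s)))
        * ∫⁻ x in ball (0 : EuclideanSpace ℝ (Fin d)) 1,
            ∫⁻ y in ball (0 : EuclideanSpace ℝ (Fin d)) 1,
              (if ‖x - y‖ ≤ 1 / R then
                ENNReal.ofReal (|u x - u y| ^ p)
                  / ENNReal.ofReal (‖x - y‖ ^ ((d : ℝ) + p * s))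
              else 0) := by
  classical
  obtain ⟨hmeas, -⟩ := hu
  set v := hmeas.mk u with hvdef
  have hv : Measurable v := hmeas.stronglyMeasurable_mk.measurable
  have hae : u =ᵐ[volume.restrict (ball (0 : EuclideanSpace ℝ (Fin d)) 1)] v :=
    hmeas.ae_eq_mk
  have congrL : (∫⁻ x in ball (0 : EuclideanSpace ℝ (Fin d)) 1,
        ∫⁻ y in ball (0 : EuclideanSpace ℝ (Fin d)) 1,
          ENNReal.ofReal (|u x - u y| ^ p)
            / ENNReal.ofReal (‖x - y‖ ^ ((d : ℝ) + p * s)))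
      = ∫⁻ x in ball (0 : EuclideanSpace ℝ (Fin d)) 1,
          ∫⁻ y in ball (0 : EuclideanSpace ℝ (Fin d)) 1,
            ENNReal.ofReal (|v x - v y| ^ p)
              / ENNReal.ofReal (‖x - y‖ ^ ((d : ℝ) + p * s)) := by
    apply lintegral_congr_ae
    filter_upwards [hae] with x hx
    apply lintegral_congr_ae
    filter_upwards [hae] with y hy
    rw [hx, hy]
  have congrR : (∫⁻ x in ball (0 : EuclideanSpace ℝ (Fin d)) 1,
        ∫⁻ y in ball (0 : EuclideanSpace ℝ (Fin d)) 1,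
          (if ‖x - y‖ ≤ 1 / R then
            ENNReal.ofReal (|u x - u y| ^ p)
              / ENNReal.ofReal (‖x - y‖ ^ ((d : ℝ) + p * s))
          else 0))
      = ∫⁻ x in ball (0 : EuclideanSpace ℝ (Fin d)) 1,
          ∫⁻ y in ball (0 : EuclideanSpace ℝ (Fin d)) 1,
            (if ‖x - y‖ ≤ 1 / R then
              ENNReal.ofReal (|v x - v y| ^ p)
                / ENNReal.ofReal (‖x - y‖ ^ ((d : ℝ) + p * s))
            else 0) := by
    apply lintegral_congr_ae
    filter_upwards [hae] with x hx
    apply lintegral_congr_ae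
    filter_upwards [hae] with y hy
    rw [hx, hy]
  rw [congrL, congrR]
  exact core R p s hR hp hs0 hs1 v hv
end

section
/- Let Ω be a finite measure space, p ≥ 1 and a > 0. Assume f ∈ L^p(Ω) with ∫_Ω f = 0. Then ∫_{Ω ∩ {−2a ≤ f ≤ 0}} |f|^p ≤ 2^{p−1} ∫_{Ω ∩ {f > 0}} |f + a|^p. -/
open MeasureTheory ENNReal

private lemma rpow_le_aux10 {t M p : ℝ} (hp : 1 ≤ p) (ht : 0 ≤ t) (htM : t ≤ M) :
    t ^ p ≤ M ^ (p - 1) * t := by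
  rcases eq_or_lt_of_le ht with h | h
  · rw [← h, Real.zero_rpow (by linarith : p ≠ 0), mul_zero]
  · calc t ^ p = t ^ (p - 1) * t := by
          rw [← Real.rpow_add_one h.ne']; ring_nf
    _ ≤ M ^ (p - 1) * t :=
          mul_le_mul_of_nonneg_right (Real.rpow_le_rpow ht htM (by linarith)) ht

private lemma stmt_10_aux {Ω : Type*} [MeasurableSpace Ω] (μ : Measure Ω) [IsFiniteMeasure μ]
    (p : ℝ) (hp : 1 ≤ p) (a : ℝ) (ha : 0 < a)
    (g : Ω → ℝ) (hgm : Measurable g) (hint : Integrable g μ)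
    (hmean : ∫ x, g x ∂μ = 0) :
    ∫⁻ x in {x | -(2 * a) ≤ g x ∧ g x ≤ 0}, ENNReal.ofReal (|g x| ^ p) ∂μ
      ≤ ENNReal.ofReal (2 ^ (p - 1))
        * ∫⁻ x in {x | 0 < g x}, ENNReal.ofReal (|g x + a| ^ p) ∂μ := by
  have hp1 : (0:ℝ) ≤ p - 1 := by linarith
  have hB : MeasurableSet {x | 0 < g x} := measurableSet_lt measurable_const hgm
  set c : ℝ := 2 ^ (p - 1) * a ^ (p - 1) with hc
  have hc0 : 0 ≤ c := by positivity
  -- step 1 : pointwise bound on A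
  have step1 : ∫⁻ x in {x | -(2 * a) ≤ g x ∧ g x ≤ 0}, ENNReal.ofReal (|g x| ^ p) ∂μ
      ≤ ENNReal.ofReal c * ∫⁻ x in {x | -(2 * a) ≤ g x ∧ g x ≤ 0}, ENNReal.ofReal (-g x) ∂μ := by
    rw [← lintegral_const_mul _ (by fun_prop)]
    apply setLIntegral_mono (by fun_prop)
    intro x hx
    rw [← ENNReal.ofReal_mul hc0]
    apply ENNReal.ofReal_le_ofReal
    have h1 : |g x| = -g x := abs_of_nonpos hx.2
    calc |g x| ^ p ≤ (2 * a) ^ (p - 1) * |g x| :=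
          rpow_le_aux10 hp (abs_nonneg _) (by rw [h1]; linarith [hx.1])
    _ = c * (-g x) := by rw [h1, hc, Real.mul_rpow (by norm_num) ha.le]
  -- finiteness
  have hfin : ∀ h : Ω → ℝ, Integrable h μ → ∫⁻ x, ENNReal.ofReal (h x) ∂μ ≠ ∞ := by
    intro h hh
    refine ((lintegral_mono fun x => ?_).trans_lt hh.2).ne
    rw [← ofReal_norm, Real.norm_eq_abs]
    exact ENNReal.ofReal_le_ofReal (le_abs_self _)
  -- mean zero : ∫⁻ (−g)⁺ = ∫⁻ g⁺
  have key : ∫⁻ x, ENNReal.ofReal (-g x) ∂μ = ∫⁻ x, ENNReal.ofReal (g x) ∂μ := by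
    have h := integral_eq_lintegral_pos_part_sub_lintegral_neg_part hint
    rw [hmean, eq_comm, sub_eq_zero] at h
    exact ((ENNReal.toReal_eq_toReal_iff' (hfin g hint) (hfin _ hint.neg)).mp h).symm
  -- support restriction
  have hsupp : ∫⁻ x, ENNReal.ofReal (g x) ∂μ
      = ∫⁻ x in {x | 0 < g x}, ENNReal.ofReal (g x) ∂μ := by
    refine (setLIntegral_eq_of_support_subset fun x hx => ?_).symm
    simp only [Function.mem_support, ne_eq, ENNReal.ofReal_eq_zero, not_le] at hx
    exact hx
  -- final pointwise bound on {0 < g}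
  have step2 : ∫⁻ x in {x | 0 < g x}, ENNReal.ofReal c * ENNReal.ofReal (g x) ∂μ
      ≤ ∫⁻ x in {x | 0 < g x},
          ENNReal.ofReal (2 ^ (p - 1)) * ENNReal.ofReal (|g x + a| ^ p) ∂μ := by
    apply setLIntegral_mono (by fun_prop)
    intro x hx
    have hx : 0 < g x := hx
    rw [hc, ENNReal.ofReal_mul (by positivity), mul_assoc, ← ENNReal.ofReal_mul (by positivity)]
    refine mul_le_mul_right (ENNReal.ofReal_le_ofReal ?_) _
    have habs : |g x + a| = g x + a := abs_of_pos (by linarith)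
    rw [habs]
    calc a ^ (p - 1) * g x ≤ (g x + a) ^ (p - 1) * (g x + a) :=
          mul_le_mul (Real.rpow_le_rpow ha.le (by linarith) hp1) (by linarith) hx.le
            (by positivity)
    _ = (g x + a) ^ p := by rw [← Real.rpow_add_one (by positivity)]; ring_nf
  calc ∫⁻ x in {x | -(2 * a) ≤ g x ∧ g x ≤ 0}, ENNReal.ofReal (|g x| ^ p) ∂μ
      ≤ ENNReal.ofReal c * ∫⁻ x in {x | -(2 * a) ≤ g x ∧ g x ≤ 0}, ENNReal.ofReal (-g x) ∂μ :=
        step1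
    _ ≤ ENNReal.ofReal c * ∫⁻ x, ENNReal.ofReal (-g x) ∂μ := by
        gcongr; exact Measure.restrict_le_self
    _ = ENNReal.ofReal c * ∫⁻ x in {x | 0 < g x}, ENNReal.ofReal (g x) ∂μ := by
        rw [key, hsupp]
    _ = ∫⁻ x in {x | 0 < g x}, ENNReal.ofReal c * ENNReal.ofReal (g x) ∂μ :=
        (lintegral_const_mul _ (by fun_prop)).symm
    _ ≤ ∫⁻ x in {x | 0 < g x},
          ENNReal.ofReal (2 ^ (p - 1)) * ENNReal.ofReal (|g x + a| ^ p) ∂μ := step2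
    _ = ENNReal.ofReal (2 ^ (p - 1))
        * ∫⁻ x in {x | 0 < g x}, ENNReal.ofReal (|g x + a| ^ p) ∂μ :=
        lintegral_const_mul _ (by fun_prop)

/-- Let `Ω` be a finite measure space, `p ≥ 1` and `a > 0`.
If `f ∈ L^p(Ω)` with `∫_Ω f = 0`, then
`∫_{Ω ∩ {−2a ≤ f ≤ 0}} |f|^p ≤ 2^{p−1} ∫_{Ω ∩ {f > 0}} |f + a|^p`. -/
theorem stmt_10 {Ω : Type*} [MeasurableSpace Ω] (μ : Measure Ω) [IsFiniteMeasure μ]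
    (p : ℝ) (hp : 1 ≤ p) (a : ℝ) (ha : 0 < a)
    (f : Ω → ℝ) (hf : MemLp f (ENNReal.ofReal p) μ)
    (hmean : ∫ x, f x ∂μ = 0) :
    ∫⁻ x in {x | -(2 * a) ≤ f x ∧ f x ≤ 0}, ENNReal.ofReal (|f x| ^ p) ∂μ
      ≤ ENNReal.ofReal (2 ^ (p - 1))
        * ∫⁻ x in {x | 0 < f x}, ENNReal.ofReal (|f x + a| ^ p) ∂μ := by
  obtain ⟨g, hgm, hfg⟩ := hf.aestronglyMeasurable
  have hfint : Integrable f μ := hf.integrable (by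
    rw [← ENNReal.ofReal_one]
    exact ENNReal.ofReal_le_ofReal hp)
  have hgint : Integrable g μ := hfint.congr hfg
  have hgmean : ∫ x, g x ∂μ = 0 := by rw [← integral_congr_ae hfg]; exact hmean
  have hsetA : μ.restrict {x | -(2 * a) ≤ f x ∧ f x ≤ 0}
      = μ.restrict {x | -(2 * a) ≤ g x ∧ g x ≤ 0} :=
    Measure.restrict_congr_set (Filter.eventuallyEq_set.mpr (hfg.mono fun x hx => by
      simp only [Set.mem_setOf_eq, hx]))
  have hsetB : μ.restrict {x | 0 < f x} = μ.restrict {x | 0 < g x} :=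
    Measure.restrict_congr_set (Filter.eventuallyEq_set.mpr (hfg.mono fun x hx => by
      simp only [Set.mem_setOf_eq, hx]))
  calc ∫⁻ x in {x | -(2 * a) ≤ f x ∧ f x ≤ 0}, ENNReal.ofReal (|f x| ^ p) ∂μ
      = ∫⁻ x in {x | -(2 * a) ≤ g x ∧ g x ≤ 0}, ENNReal.ofReal (|g x| ^ p) ∂μ := by
        rw [hsetA]
        exact lintegral_congr_ae (ae_restrict_of_ae (hfg.mono fun x hx => by simp only [hx]))
    _ ≤ ENNReal.ofReal (2 ^ (p - 1))
        * ∫⁻ x in {x | 0 < g x}, ENNReal.ofReal (|g x + a| ^ p) ∂μ :=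
        stmt_10_aux μ p hp a ha g hgm.measurable hgint hgmean
    _ = ENNReal.ofReal (2 ^ (p - 1))
        * ∫⁻ x in {x | 0 < f x}, ENNReal.ofReal (|f x + a| ^ p) ∂μ := by
        rw [hsetB]
        congr 1
        exact lintegral_congr_ae (ae_restrict_of_ae (hfg.mono fun x hx => by simp only [hx]))
end
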